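/- arXiv:1209.4628 — 3 statements merged into one kernel-verified Lean document; each statement's English description precedes it below -/
import Mathlib

section
/- Let (Ge, Go) be a signed graph on a finite vertex type V, and suppose V = V₁ ∪ V₂ with V₁ ∩ V₂ = {v}, where every edge of Ge ⊔ Go has both ends in V₁ or both ends in V₂. For i = 1, 2 let (Geᵢ, Goᵢ) be the signed graph induced on Vᵢ. Then ν(Ge, Go) = max(ν(Ge₁, Go₁), ν(Ge₂, Go₂)). -/
open Matrix

/-- The set `S(Ge, Go)` of real symmetric matrices compatible with the signed graph
encoded by the pair of simple graphs `(Ge, Go)` (even graph / odd graph). -/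
def SignedSet {V : Type*} (Ge Go : SimpleGraph V) : Set (Matrix V V ℝ) :=
  {A | A.IsSymm ∧ ∀ i j,
    ((Ge.Adj i j ∧ ¬ Go.Adj i j) → A i j < 0) ∧
    ((Go.Adj i j ∧ ¬ Ge.Adj i j) → 0 < A i j) ∧
    ((i ≠ j ∧ ¬ Ge.Adj i j ∧ ¬ Go.Adj i j) → A i j = 0)}

/-- The nullity of a matrix: the dimension of its kernel. -/
noncomputable def matNullity {V : Type*} [Fintype V] (A : Matrix V V ℝ) : ℕ :=
  Module.finrank ℝ (LinearMap.ker A.mulVecLin)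

/-- The Strong Arnold Property for a matrix with respect to a signed graph `(Ge, Go)`. -/
def HasSAP {V : Type*} [Fintype V] (Ge Go : SimpleGraph V) (A : Matrix V V ℝ) : Prop :=
  ∀ X : Matrix V V ℝ, X.IsSymm →
    (∀ i j, (i = j ∨ (Ge ⊔ Go).Adj i j) → X i j = 0) →
    A * X = 0 → X = 0

/-- `ν(Ge, Go)`: the maximum nullity of a positive semidefinite matrix in `S(Ge, Go)`
having the Strong Arnold Property. -/
noncomputable def nuSigned {V : Type*} [Fintype V] (Ge Go : SimpleGraph V) : ℕ :=
  sSup {n | ∃ A ∈ SignedSet Ge Go, A.PosSemidef ∧ HasSAP Ge Go A ∧ matNullity A = n}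

/-- `M₊(Ge, Go)`: the maximum nullity of a positive semidefinite matrix in `S(Ge, Go)`. -/
noncomputable def MplusSigned {V : Type*} [Fintype V] (Ge Go : SimpleGraph V) : ℕ :=
  sSup {n | ∃ A ∈ SignedSet Ge Go, A.PosSemidef ∧ matNullity A = n}

/-- A signed graph `(Ge, Go)` is bipartite (balanced) if some set `U` of vertices meets
every odd edge in exactly one end and every even edge in both ends or neither end. -/
def IsBalanced {V : Type*} (Ge Go : SimpleGraph V) : Prop :=
  ∃ U : Set V, (∀ i j, Go.Adj i j → ((i ∈ U) ↔ j ∉ U)) ∧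
    (∀ i j, Ge.Adj i j → ((i ∈ U) ↔ j ∈ U))

namespace Stmt11Aux
set_option linter.unusedSectionVars false
variable {V : Type*} [Fintype V] [DecidableEq V]

/-- restriction of a vector to a finset -/
def res (W : Finset V) (x : V → ℝ) : {a // a ∈ W} → ℝ := fun i => x i.1

/-- extension by zero -/
def ext (W : Finset V) (y : {a // a ∈ W} → ℝ) : V → ℝ :=
  fun i => if h : i ∈ W then y ⟨i, h⟩ else 0

/-- extension of a matrix by zero -/
def mExt (W : Finset V) (B : Matrix {a // a ∈ W} {a // a ∈ W} ℝ) : Matrix V V ℝ :=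
  fun i j => if hi : i ∈ W then if hj : j ∈ W then B ⟨i, hi⟩ ⟨j, hj⟩ else 0 else 0

lemma ext_apply_mem (W : Finset V) (y) {i : V} (h : i ∈ W) : ext W y i = y ⟨i, h⟩ := by
  simp [ext, h]

lemma res_ext (W : Finset V) (y) : res W (ext W y) = y := by
  funext i; simp [res, ext, i.2]

lemma mExt_apply_mem (W : Finset V) (B) {i j : V} (hi : i ∈ W) (hj : j ∈ W) :
    mExt W B i j = B ⟨i, hi⟩ ⟨j, hj⟩ := by simp [mExt, hi, hj]

lemma mExt_apply_not_left (W : Finset V) (B) {i : V} (j : V) (hi : i ∉ W) :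
    mExt W B i j = 0 := by simp [mExt, hi]

lemma mExt_apply_not_right (W : Finset V) (B) (i : V) {j : V} (hj : j ∉ W) :
    mExt W B i j = 0 := by
  by_cases hi : i ∈ W <;> simp [mExt, hi, hj]

lemma mulVec_mExt (W : Finset V) (B) (x : V → ℝ) :
    (mExt W B) *ᵥ x = ext W (B *ᵥ (res W x)) := by
  funext i
  by_cases hi : i ∈ W
  · rw [ext_apply_mem W _ hi]
    simp only [mulVec, dotProduct]
    calc ∑ j : V, mExt W B i j * x j
        = ∑ j ∈ W, mExt W B i j * x j := by
          refine (Finset.sum_subset (Finset.subset_univ W) fun j _ hj => ?_).symm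
          rw [mExt_apply_not_right W B i hj, zero_mul]
      _ = ∑ j : {a // a ∈ W}, mExt W B i ↑j * x ↑j := (Finset.sum_coe_sort W _).symm
      _ = ∑ j, B ⟨i, hi⟩ j * res W x j := by
          refine Finset.sum_congr rfl fun j _ => ?_
          rw [mExt_apply_mem W B hi j.2]; rfl
  · simp [ext, hi, mulVec, dotProduct]
    apply Finset.sum_eq_zero
    intro j _
    rw [mExt_apply_not_left W B j hi, zero_mul]


lemma dot_ext (W : Finset V) (x : V → ℝ) (y : {a // a ∈ W} → ℝ) :
    x ⬝ᵥ ext W y = res W x ⬝ᵥ y := by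
  simp only [dotProduct]
  calc ∑ i : V, x i * ext W y i
      = ∑ i ∈ W, x i * ext W y i := by
        refine (Finset.sum_subset (Finset.subset_univ W) fun i _ hi => ?_).symm
        simp [ext, hi]
    _ = ∑ i : {a // a ∈ W}, x ↑i * ext W y ↑i := (Finset.sum_coe_sort W _).symm
    _ = ∑ i, res W x i * y i := by
        refine Finset.sum_congr rfl fun i _ => ?_
        rw [ext_apply_mem W y i.2]; rfl

lemma dot_mExt (W : Finset V) (B) (x : V → ℝ) :
    x ⬝ᵥ (mExt W B) *ᵥ x = res W x ⬝ᵥ B *ᵥ (res W x) := by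
  rw [mulVec_mExt, dot_ext]

lemma mExt_posSemidef (W : Finset V) {B : Matrix {a // a ∈ W} {a // a ∈ W} ℝ}
    (hB : B.PosSemidef) : (mExt W B).PosSemidef := by
  refine Matrix.PosSemidef.of_dotProduct_mulVec_nonneg ?_ ?_
  · rw [Matrix.IsHermitian]
    funext i j
    simp only [conjTranspose_apply, star_trivial]
    by_cases hi : i ∈ W <;> by_cases hj : j ∈ W
    · rw [mExt_apply_mem W B hj hi, mExt_apply_mem W B hi hj]
      exact congrFun (congrFun hB.1 _) _
    · rw [mExt_apply_not_right W B i hj, mExt_apply_not_left W B i hj]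
    · rw [mExt_apply_not_left W B j hi, mExt_apply_not_right W B j hi]
    · rw [mExt_apply_not_left W B i hj, mExt_apply_not_left W B j hi]
  · intro x
    simpa only [star_trivial, dot_mExt] using hB.dotProduct_mulVec_nonneg (res W x)

/-- real PSD quadratic-form-zero implies kernel -/
lemma psd_dot_zero {n : Type*} [Fintype n] {M : Matrix n n ℝ} (hM : M.PosSemidef)
    {x : n → ℝ} (h : x ⬝ᵥ M *ᵥ x = 0) : M *ᵥ x = 0 :=
  (hM.dotProduct_mulVec_zero_iff x).1 (by simpa using h)

/-- kernel splitting for a sum of two extended PSD matrices -/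
lemma ker_split {W₁ W₂ : Finset V} {B₁ : Matrix {a // a ∈ W₁} {a // a ∈ W₁} ℝ}
    {B₂ : Matrix {a // a ∈ W₂} {a // a ∈ W₂} ℝ} (hB₁ : B₁.PosSemidef) (hB₂ : B₂.PosSemidef)
    {A : Matrix V V ℝ} (hsum : mExt W₁ B₁ + mExt W₂ B₂ = A) (x : V → ℝ) :
    A *ᵥ x = 0 ↔ B₁ *ᵥ res W₁ x = 0 ∧ B₂ *ᵥ res W₂ x = 0 := by
  constructor
  · intro h
    have hq : res W₁ x ⬝ᵥ B₁ *ᵥ res W₁ x + res W₂ x ⬝ᵥ B₂ *ᵥ res W₂ x = 0 := by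
      have := congrArg (fun y => x ⬝ᵥ y) h
      simpa [← hsum, add_mulVec, dotProduct_add, dot_mExt] using this
    have h1 : res W₁ x ⬝ᵥ B₁ *ᵥ res W₁ x = 0 := by
      have a1 := hB₁.dotProduct_mulVec_nonneg (res W₁ x); have a2 := hB₂.dotProduct_mulVec_nonneg (res W₂ x)
      simp only [star_trivial] at a1 a2; linarith
    have h2 : res W₂ x ⬝ᵥ B₂ *ᵥ res W₂ x = 0 := by
      have a1 := hB₁.dotProduct_mulVec_nonneg (res W₁ x); simp only [star_trivial] at a1; linarith
    exact ⟨psd_dot_zero hB₁ h1, psd_dot_zero hB₂ h2⟩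
  · rintro ⟨h1, h2⟩
    rw [← hsum, add_mulVec, mulVec_mExt, mulVec_mExt, h1, h2]
    funext i; simp [ext]


lemma nullity_le_of_inj {n m : Type*} [Fintype n] [Fintype m] {M : Matrix n n ℝ}
    {N : Matrix m m ℝ} (f : (n → ℝ) →ₗ[ℝ] (m → ℝ))
    (hmap : ∀ x, M *ᵥ x = 0 → N *ᵥ f x = 0)
    (hinj : ∀ x, M *ᵥ x = 0 → f x = 0 → x = 0) :
    matNullity M ≤ matNullity N := by
  have hres : ∀ x ∈ LinearMap.ker M.mulVecLin, f x ∈ LinearMap.ker N.mulVecLin := by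
    intro x hx
    exact LinearMap.mem_ker.2 (by simpa using hmap x (by simpa using LinearMap.mem_ker.1 hx))
  refine LinearMap.finrank_le_finrank_of_injective (f := f.restrict hres) ?_
  rw [← LinearMap.ker_eq_bot, LinearMap.ker_eq_bot']
  rintro ⟨x, hx⟩ h
  have hx0 : M *ᵥ x = 0 := by simpa using LinearMap.mem_ker.1 hx
  have : f x = 0 := congrArg Subtype.val h
  exact Subtype.ext (hinj x hx0 this)

lemma matNullity_le_card {n : Type*} [Fintype n] (M : Matrix n n ℝ) :
    matNullity M ≤ Fintype.card n := by
  refine le_trans (Submodule.finrank_le _) ?_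
  simp [Module.finrank_fintype_fun_eq_card]


open scoped RealInnerProductSpace in
lemma gram_psd {m : Type*} [Fintype m] {F : Type*} [NormedAddCommGroup F]
    [InnerProductSpace ℝ F] (f : m → F) :
    (Matrix.of fun i j => (⟪f i, f j⟫ : ℝ)).PosSemidef := by
  refine Matrix.PosSemidef.of_dotProduct_mulVec_nonneg ?_ ?_
  · funext i j
    simp [conjTranspose_apply, real_inner_comm]
  · intro x
    have key : x ⬝ᵥ ((Matrix.of fun i j => (⟪f i, f j⟫ : ℝ)) *ᵥ x)
        = ⟪∑ i, x i • f i, ∑ i, x i • f i⟫ := by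
      rw [sum_inner]
      simp only [dotProduct, mulVec, inner_sum, real_inner_smul_left, real_inner_smul_right,
        Matrix.of_apply, Finset.mul_sum]
      refine Finset.sum_congr rfl fun i _ => Finset.sum_congr rfl fun j _ => by ring
    simpa [key] using real_inner_self_nonneg


open scoped RealInnerProductSpace MatrixOrder in
lemma split_exists {A : Matrix V V ℝ} (hApsd : A.PosSemidef)
    (W₁ W₂ : Finset V) (v : V) (hv₁ : v ∈ W₁) (hv₂ : v ∈ W₂)
    (hint : ∀ a, a ∈ W₁ → a ∈ W₂ → a = v)
    (hcov : ∀ a : V, a ∈ W₁ ∨ a ∈ W₂)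
    (hcross : ∀ i j : V, i ∈ W₁ → i ≠ v → j ∈ W₂ → j ≠ v → A i j = 0) :
    ∃ (B₁ : Matrix {a // a ∈ W₁} {a // a ∈ W₁} ℝ)
      (B₂ : Matrix {a // a ∈ W₂} {a // a ∈ W₂} ℝ),
      B₁.PosSemidef ∧ B₂.PosSemidef ∧ mExt W₁ B₁ + mExt W₂ B₂ = A ∧
      (∀ i j : {a // a ∈ W₁}, i.1 ≠ j.1 → B₁ i j = A i.1 j.1) ∧
      (∀ i j : {a // a ∈ W₂}, i.1 ≠ j.1 → B₂ i j = A i.1 j.1) := by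
  classical
  have hAsym : ∀ i j, A i j = A j i := by
    intro i j
    conv_lhs => rw [← hApsd.1]
    simp [conjTranspose_apply]
  set S := CFC.sqrt A with hSdef
  have hSS : S * S = A := CFC.sqrt_mul_sqrt_self A hApsd.nonneg
  have hsym : ∀ i j, S i j = S j i := by
    intro i j
    rw [hSdef]
    conv_lhs => rw [← (CFC.sqrt_nonneg A).posSemidef.1]
    simp [conjTranspose_apply]
  set g : V → EuclideanSpace ℝ V := fun i => (WithLp.equiv 2 (V → ℝ)).symm (fun k => S k i)
    with hgdef
  have hgg : ∀ i j, (⟪g i, g j⟫ : ℝ) = A i j := by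
    intro i j
    rw [← hSS]
    simp only [hgdef, PiLp.inner_apply, RCLike.inner_apply, conj_trivial,
      WithLp.equiv_symm_apply, PiLp.toLp_apply, Matrix.mul_apply]
    exact Finset.sum_congr rfl fun k _ => by rw [hsym i k, mul_comm]
  set U : Submodule ℝ (EuclideanSpace ℝ V) :=
    Submodule.span ℝ (g '' {j : V | j ∈ W₂ ∧ j ≠ v}) with hUdef
  set p : EuclideanSpace ℝ V := (U.orthogonalProjectionOnto (g v) : EuclideanSpace ℝ V) with hpdef
  have hpU : p ∈ U := Submodule.coe_mem _
  have hortho : g v - p ∈ Uᗮ := Submodule.sub_starProjection_mem_orthogonal (K := U) (g v)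
  have hgU : ∀ j : V, j ∈ W₂ → j ≠ v → g j ∈ U := fun j hj hjv =>
    Submodule.subset_span ⟨j, ⟨hj, hjv⟩, rfl⟩
  have hg_orth : ∀ i : V, i ∈ W₁ → i ≠ v → g i ∈ Uᗮ := by
    intro i hi hiv
    rw [Submodule.mem_orthogonal]
    intro u hu
    induction hu using Submodule.span_induction with
    | mem w hw =>
      obtain ⟨j, ⟨hj, hjv⟩, rfl⟩ := hw
      rw [hgg, hAsym]
      exact hcross i j hi hiv hj hjv
    | zero => simp
    | add y z _ _ hy hz => rw [inner_add_left, hy, hz, add_zero]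
    | smul c y _ hy => rw [inner_smul_left, hy, mul_zero]
  have hgp0 : ∀ i : V, i ∈ W₁ → i ≠ v → (⟪g i, p⟫ : ℝ) = 0 := fun i hi hiv =>
    Submodule.inner_left_of_mem_orthogonal hpU (hg_orth i hi hiv)
  have hgjp : ∀ j : V, j ∈ W₂ → j ≠ v → (⟪g j, p⟫ : ℝ) = A j v := by
    intro j hj hjv
    have h0 : (⟪g j, g v - p⟫ : ℝ) = 0 :=
      Submodule.inner_right_of_mem_orthogonal (hgU j hj hjv) hortho
    rw [inner_sub_right, hgg, sub_eq_zero] at h0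
    exact h0.symm
  have hpp : (⟪g v, p⟫ : ℝ) = ⟪p, p⟫ := by
    have h0 : (⟪p, g v - p⟫ : ℝ) = 0 := Submodule.inner_right_of_mem_orthogonal hpU hortho
    rw [inner_sub_right, sub_eq_zero] at h0
    rw [real_inner_comm p (g v)]
    exact h0
  set f₁ : {a // a ∈ W₁} → EuclideanSpace ℝ V :=
    fun i => if i.1 = v then g v - p else g i.1 with hf₁def
  set f₂ : {a // a ∈ W₂} → EuclideanSpace ℝ V :=
    fun i => if i.1 = v then p else g i.1 with hf₂def
  have e₁ : ∀ (i j : V) (hi : i ∈ W₁) (hj : j ∈ W₁), ¬(i = v ∧ j = v) →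
      (⟪f₁ ⟨i, hi⟩, f₁ ⟨j, hj⟩⟫ : ℝ) = A i j := by
    intro i j hi hj hnot
    by_cases hiv : i = v
    · have hjv : j ≠ v := fun h => hnot ⟨hiv, h⟩
      subst hiv
      simp only [hf₁def, if_pos rfl, if_neg hjv]
      rw [inner_sub_left, hgg, real_inner_comm (g j) p, hgp0 j hj hjv, sub_zero]
    · by_cases hjv : j = v
      · subst hjv
        simp only [hf₁def, if_neg hiv, if_pos rfl]
        rw [inner_sub_right, hgg, hgp0 i hi hiv, sub_zero]
      · simp only [hf₁def, if_neg hiv, if_neg hjv]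
        exact hgg i j
  have e₂ : ∀ (i j : V) (hi : i ∈ W₂) (hj : j ∈ W₂), ¬(i = v ∧ j = v) →
      (⟪f₂ ⟨i, hi⟩, f₂ ⟨j, hj⟩⟫ : ℝ) = A i j := by
    intro i j hi hj hnot
    by_cases hiv : i = v
    · have hjv : j ≠ v := fun h => hnot ⟨hiv, h⟩
      subst hiv
      simp only [hf₂def, if_pos rfl, if_neg hjv]
      rw [real_inner_comm (g j) p, hgjp j hj hjv]
      exact hAsym _ _
    · by_cases hjv : j = v
      · subst hjv
        simp only [hf₂def, if_neg hiv, if_pos rfl]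
        exact hgjp i hi hiv
      · simp only [hf₂def, if_neg hiv, if_neg hjv]
        exact hgg i j
  have evv : (⟪f₁ ⟨v, hv₁⟩, f₁ ⟨v, hv₁⟩⟫ : ℝ) + (⟪f₂ ⟨v, hv₂⟩, f₂ ⟨v, hv₂⟩⟫ : ℝ) = A v v := by
    simp only [hf₁def, hf₂def, if_pos rfl]
    rw [inner_sub_left, inner_sub_right, inner_sub_right, hgg, real_inner_comm (g v) p, hpp]
    ring
  refine ⟨Matrix.of fun i j => (⟪f₁ i, f₁ j⟫ : ℝ), Matrix.of fun i j => (⟪f₂ i, f₂ j⟫ : ℝ),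
    gram_psd f₁, gram_psd f₂, ?_, ?_, ?_⟩
  · funext i j
    simp only [Matrix.add_apply]
    by_cases hi1 : i ∈ W₁ <;> by_cases hj1 : j ∈ W₁
    · by_cases hvv : i = v ∧ j = v
      · obtain ⟨rfl, h2⟩ := hvv
        subst h2
        rw [mExt_apply_mem W₁ _ hv₁ hv₁, mExt_apply_mem W₂ _ hv₂ hv₂]
        exact evv
      · rw [mExt_apply_mem W₁ _ hi1 hj1]
        have h2 : mExt W₂ (Matrix.of fun i j => (⟪f₂ i, f₂ j⟫ : ℝ)) i j = 0 := by
          by_cases hi2 : i ∈ W₂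
          · by_cases hj2 : j ∈ W₂
            · exact absurd ⟨hint i hi1 hi2, hint j hj1 hj2⟩ hvv
            · exact mExt_apply_not_right _ _ _ hj2
          · exact mExt_apply_not_left _ _ _ hi2
        rw [h2, add_zero]
        exact e₁ i j hi1 hj1 hvv
    · have hj2 : j ∈ W₂ := (hcov j).resolve_left hj1
      have hjv : j ≠ v := fun h => hj1 (h ▸ hv₁)
      rw [mExt_apply_not_right _ _ _ hj1, zero_add]
      by_cases hi2 : i ∈ W₂
      · rw [mExt_apply_mem W₂ _ hi2 hj2]
        exact e₂ i j hi2 hj2 (fun h => hjv h.2)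
      · rw [mExt_apply_not_left _ _ _ hi2]
        have hiv : i ≠ v := fun h => hi2 (h ▸ hv₂)
        exact (hcross i j hi1 hiv hj2 hjv).symm
    · have hi2 : i ∈ W₂ := (hcov i).resolve_left hi1
      have hiv : i ≠ v := fun h => hi1 (h ▸ hv₁)
      rw [mExt_apply_not_left _ _ _ hi1, zero_add]
      by_cases hj2 : j ∈ W₂
      · rw [mExt_apply_mem W₂ _ hi2 hj2]
        exact e₂ i j hi2 hj2 (fun h => hiv h.1)
      · rw [mExt_apply_not_right _ _ _ hj2]
        have hjv : j ≠ v := fun h => hj2 (h ▸ hv₂)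
        rw [hAsym]
        exact (hcross j i hj1 hjv hi2 hiv).symm
    · have hi2 : i ∈ W₂ := (hcov i).resolve_left hi1
      have hj2 : j ∈ W₂ := (hcov j).resolve_left hj1
      have hiv : i ≠ v := fun h => hi1 (h ▸ hv₁)
      rw [mExt_apply_not_left _ _ _ hi1, zero_add, mExt_apply_mem W₂ _ hi2 hj2]
      exact e₂ i j hi2 hj2 (fun h => hiv h.1)
  · intro i j hij
    have hnot : ¬(i.1 = v ∧ j.1 = v) := fun h => hij (h.1.trans h.2.symm)
    exact e₁ i.1 j.1 i.2 j.2 hnot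
  · intro i j hij
    have hnot : ¬(i.1 = v ∧ j.1 = v) := fun h => hij (h.1.trans h.2.symm)
    exact e₂ i.1 j.1 i.2 j.2 hnot


/-- helper: symmetry of the bilinear form of a symmetric matrix -/
lemma bilin_comm {m : Type*} [Fintype m] {C : Matrix m m ℝ} (hC : ∀ i j, C i j = C j i)
    (x y : m → ℝ) : x ⬝ᵥ C *ᵥ y = y ⬝ᵥ C *ᵥ x := by
  simp only [dotProduct, mulVec, Finset.mul_sum]
  rw [Finset.sum_comm]
  refine Finset.sum_congr rfl fun i _ => Finset.sum_congr rfl fun j _ => by rw [hC j i]; ring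

/-- Existence of a PSD matrix in the signed set with one-dimensional kernel spanned by a
vector not vanishing at a given vertex. -/
lemma pd_pattern_exists {m : Type*} [Fintype m] [DecidableEq m] (He Ho : SimpleGraph m)
    (w : m) :
    ∃ (B : Matrix m m ℝ) (y : m → ℝ), B.PosSemidef ∧ B ∈ SignedSet He Ho ∧
      B *ᵥ y = 0 ∧ y w ≠ 0 ∧ ∀ x, B *ᵥ x = 0 → ∃ c : ℝ, x = c • y := by
  classical
  set P : Matrix m m ℝ := Matrix.of fun i j =>
    if He.Adj i j then (if Ho.Adj i j then 0 else -1) else (if Ho.Adj i j then 1 else 0)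
    with hPdef
  have hPsym : ∀ i j, P i j = P j i := by
    intro i j
    simp only [hPdef, Matrix.of_apply, He.adj_comm i j, Ho.adj_comm i j]
  set t : ℝ := 1 + ∑ i, ∑ j, |P i j| with htdef
  set C : Matrix m m ℝ := P + t • (1 : Matrix m m ℝ) with hCdef
  have hCsym : ∀ i j, C i j = C j i := by
    intro i j
    simp only [hCdef, Matrix.add_apply, Matrix.smul_apply, hPsym i j, Matrix.one_apply]
    by_cases h : i = j <;> simp [h, eq_comm]
  have hCoff : ∀ i j, i ≠ j → C i j = P i j := by
    intro i j hij
    simp [hCdef, Matrix.one_apply_ne hij]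
  -- C is positive definite
  have hCpd : C.PosDef := by
    refine Matrix.PosDef.of_dotProduct_mulVec_pos ?_ ?_
    · funext i j
      simp only [conjTranspose_apply, star_trivial]
      exact hCsym j i
    · intro x hx
      have hxx : 0 < x ⬝ᵥ x := by
        rcases Function.ne_iff.1 hx with ⟨i, hi⟩
        have h1 : x i * x i ≤ x ⬝ᵥ x := by
          refine Finset.single_le_sum (f := fun k => x k * x k) (fun k _ => mul_self_nonneg _)
            (Finset.mem_univ i)
        nlinarith [mul_self_pos.2 hi]
      have hsq : ∀ i j : m, |x i * x j| ≤ x ⬝ᵥ x := by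
        intro i j
        have h1 : x i * x i ≤ x ⬝ᵥ x :=
          Finset.single_le_sum (f := fun k => x k * x k) (fun k _ => mul_self_nonneg _)
            (Finset.mem_univ i)
        have h2 : x j * x j ≤ x ⬝ᵥ x :=
          Finset.single_le_sum (f := fun k => x k * x k) (fun k _ => mul_self_nonneg _)
            (Finset.mem_univ j)
        have := abs_mul_abs_self (x i)
        have := abs_mul_abs_self (x j)
        rw [abs_mul]
        nlinarith [abs_nonneg (x i), abs_nonneg (x j), sq_nonneg (|x i| - |x j|)]
      have hPbound : |x ⬝ᵥ P *ᵥ x| ≤ (∑ i, ∑ j, |P i j|) * (x ⬝ᵥ x) := by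
        calc |x ⬝ᵥ P *ᵥ x|
            = |∑ i, x i * ∑ j, P i j * x j| := by simp only [dotProduct, mulVec]
          _ ≤ ∑ i, |x i * ∑ j, P i j * x j| := Finset.abs_sum_le_sum_abs _ _
          _ ≤ ∑ i, ∑ j, |P i j| * (x ⬝ᵥ x) := by
              refine Finset.sum_le_sum fun i _ => ?_
              rw [abs_mul]
              calc |x i| * |∑ j, P i j * x j|
                  ≤ |x i| * ∑ j, |P i j * x j| := by
                    have := Finset.abs_sum_le_sum_abs (fun j => P i j * x j) Finset.univ
                    exact mul_le_mul_of_nonneg_left this (abs_nonneg _)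
                _ = ∑ j, |P i j| * (|x i| * |x j|) := by
                    rw [Finset.mul_sum]
                    refine Finset.sum_congr rfl fun j _ => ?_
                    rw [abs_mul]; ring
                _ ≤ ∑ j, |P i j| * (x ⬝ᵥ x) := by
                    refine Finset.sum_le_sum fun j _ => ?_
                    refine mul_le_mul_of_nonneg_left ?_ (abs_nonneg _)
                    rw [← abs_mul]
                    exact hsq i j
          _ = (∑ i, ∑ j, |P i j|) * (x ⬝ᵥ x) := by
              rw [Finset.sum_mul]
              exact Finset.sum_congr rfl fun i _ => by rw [Finset.sum_mul]
      have hquad : x ⬝ᵥ C *ᵥ x = x ⬝ᵥ P *ᵥ x + t * (x ⬝ᵥ x) := by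
        simp only [hCdef, Matrix.add_mulVec, dotProduct_add, Matrix.smul_mulVec,
          dotProduct_smul, Matrix.one_mulVec, smul_eq_mul]
      simp only [star_trivial]
      rw [hquad, htdef]
      have habs := abs_le.1 hPbound
      nlinarith [habs.1]
  have hCdet : IsUnit C.det := isUnit_iff_ne_zero.2 (ne_of_gt hCpd.det_pos)
  set y : m → ℝ := C⁻¹ *ᵥ Pi.single w 1 with hydef
  have hCy : C *ᵥ y = Pi.single w 1 := by
    rw [hydef, Matrix.mulVec_mulVec, Matrix.mul_nonsing_inv _ hCdet, Matrix.one_mulVec]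
  have hyne : y ≠ 0 := by
    intro h
    have := hCy
    rw [h, Matrix.mulVec_zero] at this
    have := congrFun this w
    simp at this
  have hyw : 0 < y w := by
    have h1 : y ⬝ᵥ C *ᵥ y = y w := by
      rw [hCy]
      simp [dotProduct, Pi.single_apply]
    have := hCpd.dotProduct_mulVec_pos hyne
    simp only [star_trivial] at this
    linarith [h1 ▸ this]
  have hyCy : y ⬝ᵥ C *ᵥ y = y w := by
    rw [hCy]
    simp [dotProduct, Pi.single_apply]
  have hxw : ∀ x : m → ℝ, x ⬝ᵥ C *ᵥ y = x w := by
    intro x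
    rw [hCy]
    simp [dotProduct, Pi.single_apply]
  set B : Matrix m m ℝ := C - (y w)⁻¹ • Matrix.vecMulVec (Pi.single w 1) (Pi.single w 1)
    with hBdef
  have hsingle0 : ∀ i j : m, i ≠ j → (Pi.single w 1 : m → ℝ) i * (Pi.single w 1 : m → ℝ) j = 0 := by
    intro i j hij
    by_cases hi : i = w
    · have hj : j ≠ w := fun h => hij (hi.trans h.symm)
      simp [Pi.single_eq_of_ne hj]
    · simp [Pi.single_eq_of_ne hi]
  have hBoff : ∀ i j, i ≠ j → B i j = P i j := by
    intro i j hij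
    simp only [hBdef, Matrix.sub_apply, Matrix.smul_apply, Matrix.vecMulVec_apply,
      hsingle0 i j hij, mul_zero, smul_eq_mul, sub_zero, hCoff i j hij]
  have hBsym : ∀ i j, B i j = B j i := by
    intro i j
    simp only [hBdef, Matrix.sub_apply, Matrix.smul_apply, Matrix.vecMulVec_apply,
      hCsym i j, smul_eq_mul]
    ring
  have h1 : ∀ x : m → ℝ,
      Matrix.vecMulVec (Pi.single w (1:ℝ)) (Pi.single w 1) *ᵥ x = (x w) • (Pi.single w 1 : m → ℝ) := by
    intro x
    funext i
    simp only [Matrix.mulVec, dotProduct, Matrix.vecMulVec_apply, Pi.smul_apply, smul_eq_mul]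
    rw [Finset.sum_eq_single w]
    · simp [mul_comm]
    · intro j _ hj
      rw [Pi.single_eq_of_ne hj]
      ring
    · intro h
      exact absurd (Finset.mem_univ w) h
  have hBquad : ∀ x : m → ℝ, x ⬝ᵥ B *ᵥ x = x ⬝ᵥ C *ᵥ x - (y w)⁻¹ * (x w * x w) := by
    intro x
    simp only [hBdef, Matrix.sub_mulVec, dotProduct_sub, Matrix.smul_mulVec,
      dotProduct_smul, smul_eq_mul]
    rw [h1 x, dotProduct_smul, smul_eq_mul]
    have : x ⬝ᵥ Pi.single w (1:ℝ) = x w := by simp [dotProduct, Pi.single_apply]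
    rw [this]
  have hBy : B *ᵥ y = 0 := by
    rw [hBdef, Matrix.sub_mulVec, Matrix.smul_mulVec, h1 y, hCy, smul_smul,
      inv_mul_cancel₀ (ne_of_gt hyw), one_smul, sub_self]
  -- Cauchy-Schwarz
  have hexp : ∀ (x : m → ℝ) (c : ℝ), (x - c • y) ⬝ᵥ C *ᵥ (x - c • y)
      = x ⬝ᵥ C *ᵥ x - 2 * c * (x w) + c * c * (y w) := by
    intro x c
    have hyx : y ⬝ᵥ C *ᵥ x = x w := by rw [bilin_comm hCsym, hxw x]
    rw [Matrix.mulVec_sub, Matrix.mulVec_smul]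
    simp only [dotProduct_sub, sub_dotProduct, dotProduct_smul, smul_dotProduct, smul_eq_mul]
    rw [hxw x, hyx, hyCy]
    ring
  have hCS : ∀ x : m → ℝ, (x w) * (x w) ≤ (x ⬝ᵥ C *ᵥ x) * (y w) := by
    intro x
    have hb := hCpd.posSemidef.dotProduct_mulVec_nonneg (x - ((x w) / (y w)) • y)
    simp only [star_trivial] at hb
    rw [hexp x ((x w) / (y w))] at hb
    have hc : (x w) / (y w) * (y w) = x w := div_mul_cancel₀ _ (ne_of_gt hyw)
    have hc2 : (x w) / (y w) * (x w) * (y w) = x w * x w := by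
      field_simp
    nlinarith [hyw]
  have hBpsd : B.PosSemidef := by
    refine Matrix.PosSemidef.of_dotProduct_mulVec_nonneg ?_ ?_
    · funext i j
      simp only [conjTranspose_apply, star_trivial]
      exact hBsym j i
    · intro x
      simp only [star_trivial]
      rw [hBquad x]
      have h2 := hCS x
      have hinv : (y w)⁻¹ * (y w) = 1 := inv_mul_cancel₀ (ne_of_gt hyw)
      nlinarith [inv_pos.2 hyw]
  refine ⟨B, y, hBpsd, ?_, hBy, ne_of_gt hyw, ?_⟩
  · refine ⟨?_, ?_⟩
    · funext i j
      simp only [Matrix.transpose_apply]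
      exact hBsym j i
    · intro i j
      refine ⟨?_, ?_, ?_⟩
      · rintro ⟨he, ho⟩
        rw [hBoff i j he.ne]
        simp [hPdef, he, ho]
      · rintro ⟨ho, he⟩
        rw [hBoff i j ho.ne]
        simp [hPdef, he, ho]
      · rintro ⟨hij, he, ho⟩
        rw [hBoff i j hij]
        simp [hPdef, he, ho]
  · intro x hBx
    refine ⟨(x w) / (y w), ?_⟩
    have hq0 : x ⬝ᵥ B *ᵥ x = 0 := by rw [hBx, dotProduct_zero]
    rw [hBquad x] at hq0
    have hz : (x - ((x w) / (y w)) • y) ⬝ᵥ C *ᵥ (x - ((x w) / (y w)) • y) = 0 := by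
      rw [hexp x ((x w) / (y w))]
      have hc : (x w) / (y w) * (y w) = x w := div_mul_cancel₀ _ (ne_of_gt hyw)
      have hinv : (y w)⁻¹ * (y w) = 1 := inv_mul_cancel₀ (ne_of_gt hyw)
      field_simp at hq0 ⊢
      nlinarith [hq0]
    by_contra hne
    have hzne : x - ((x w) / (y w)) • y ≠ 0 := fun h => hne (by rwa [sub_eq_zero] at h)
    have := hCpd.dotProduct_mulVec_pos hzne
    simp only [star_trivial] at this
    rw [hz] at this
    exact lt_irrefl 0 this


lemma psd_isSymm {n : Type*} [Fintype n] {M : Matrix n n ℝ} (h : M.PosSemidef) : M.IsSymm := by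
  rw [Matrix.IsSymm]
  funext i j
  rw [Matrix.transpose_apply]
  conv_rhs => rw [← h.1]
  simp [conjTranspose_apply]

lemma bddAbove_nuset {V : Type*} [Fintype V] (Ge Go : SimpleGraph V) :
    BddAbove {n | ∃ A ∈ SignedSet Ge Go, A.PosSemidef ∧ HasSAP Ge Go A ∧ matNullity A = n} := by
  refine ⟨Fintype.card V, ?_⟩
  rintro n ⟨A, -, -, -, rfl⟩
  exact matNullity_le_card A

/-- columns of X lie in the kernel when A * X = 0 -/
lemma cols_ker {n : Type*} [Fintype n] {A X : Matrix n n ℝ} (h : A * X = 0) (j : n) :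
    A *ᵥ (fun k => X k j) = 0 := by
  funext i
  have := congrFun (congrFun h i) j
  simpa [Matrix.mul_apply, Matrix.mulVec, dotProduct] using this


/-- one side of the 1-split: `ν` of the induced graph on `W₁` is at most `ν` of the whole. -/
lemma nu_side_le (Ge Go : SimpleGraph V) (W₁ W₂ : Finset V) (v : V)
    (hv₁ : v ∈ W₁) (hv₂ : v ∈ W₂)
    (hint : ∀ a, a ∈ W₁ → a ∈ W₂ → a = v)
    (hcov : ∀ a : V, a ∈ W₁ ∨ a ∈ W₂)
    (hedge : ∀ i j, (Ge ⊔ Go).Adj i j → ((i ∈ W₁ ∧ j ∈ W₁) ∨ (i ∈ W₂ ∧ j ∈ W₂))) :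
    nuSigned (Ge.comap (Subtype.val : {x // x ∈ W₁} → V))
             (Go.comap (Subtype.val : {x // x ∈ W₁} → V)) ≤ nuSigned Ge Go := by
  classical
  refine csSup_le' ?_
  rintro n ⟨A₁, hA₁S, hA₁psd, hA₁sap, rfl⟩
  obtain ⟨B, y, hBpsd, hBS, hBy, hyv, hker⟩ :=
    pd_pattern_exists (Ge.comap (Subtype.val : {x // x ∈ W₂} → V))
      (Go.comap (Subtype.val : {x // x ∈ W₂} → V)) ⟨v, hv₂⟩
  set A : Matrix V V ℝ := mExt W₁ A₁ + mExt W₂ B with hAdef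
  have hApsd : A.PosSemidef := (mExt_posSemidef W₁ hA₁psd).add (mExt_posSemidef W₂ hBpsd)
  have hsplit : ∀ x : V → ℝ, A *ᵥ x = 0 ↔ A₁ *ᵥ res W₁ x = 0 ∧ B *ᵥ res W₂ x = 0 :=
    ker_split hA₁psd hBpsd rfl
  -- edges of the union graph are not both `= v`
  have hadjne : ∀ i j : V, (Ge ⊔ Go).Adj i j → ¬(i ∈ W₁ ∧ j ∈ W₁) → i ∈ W₂ ∧ j ∈ W₂ :=
    fun i j h h1 => (hedge i j h).resolve_left h1
  -- entry description of A
  have hA11 : ∀ (i j : V) (hi : i ∈ W₁) (hj : j ∈ W₁), i ≠ j →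
      A i j = A₁ ⟨i, hi⟩ ⟨j, hj⟩ := by
    intro i j hi hj hij
    have h2 : mExt W₂ B i j = 0 := by
      by_cases hi2 : i ∈ W₂
      · by_cases hj2 : j ∈ W₂
        · exact absurd ((hint i hi hi2).trans (hint j hj hj2).symm) hij
        · exact mExt_apply_not_right _ _ _ hj2
      · exact mExt_apply_not_left _ _ _ hi2
    rw [hAdef, Matrix.add_apply, h2, add_zero, mExt_apply_mem W₁ _ hi hj]
  have hA22 : ∀ (i j : V) (hi : i ∈ W₂) (hj : j ∈ W₂), i ≠ j →
      A i j = B ⟨i, hi⟩ ⟨j, hj⟩ := by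
    intro i j hi hj hij
    have h2 : mExt W₁ A₁ i j = 0 := by
      by_cases hi1 : i ∈ W₁
      · by_cases hj1 : j ∈ W₁
        · exact absurd ((hint i hi1 hi).trans (hint j hj1 hj).symm) hij
        · exact mExt_apply_not_right _ _ _ hj1
      · exact mExt_apply_not_left _ _ _ hi1
    rw [hAdef, Matrix.add_apply, h2, zero_add, mExt_apply_mem W₂ _ hi hj]
  have hAcross : ∀ i j : V, ¬(i ∈ W₁ ∧ j ∈ W₁) → ¬(i ∈ W₂ ∧ j ∈ W₂) → A i j = 0 := by
    intro i j h1 h2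
    rw [hAdef, Matrix.add_apply]
    have e1 : mExt W₁ A₁ i j = 0 := by
      by_cases hi1 : i ∈ W₁
      · by_cases hj1 : j ∈ W₁
        · exact absurd ⟨hi1, hj1⟩ h1
        · exact mExt_apply_not_right _ _ _ hj1
      · exact mExt_apply_not_left _ _ _ hi1
    have e2 : mExt W₂ B i j = 0 := by
      by_cases hi2 : i ∈ W₂
      · by_cases hj2 : j ∈ W₂
        · exact absurd ⟨hi2, hj2⟩ h2
        · exact mExt_apply_not_right _ _ _ hj2
      · exact mExt_apply_not_left _ _ _ hi2
    rw [e1, e2, add_zero]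
  -- A belongs to the signed set
  have hAS : A ∈ SignedSet Ge Go := by
    refine ⟨psd_isSymm hApsd, ?_⟩
    intro i j
    refine ⟨?_, ?_, ?_⟩
    · rintro ⟨he, ho⟩
      have hij : i ≠ j := he.ne
      rcases hedge i j (by simp [he]) with ⟨hi, hj⟩ | ⟨hi, hj⟩
      · rw [hA11 i j hi hj hij]
        exact ((hA₁S.2 ⟨i, hi⟩ ⟨j, hj⟩).1 ⟨he, ho⟩)
      · rw [hA22 i j hi hj hij]
        exact ((hBS.2 ⟨i, hi⟩ ⟨j, hj⟩).1 ⟨he, ho⟩)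
    · rintro ⟨ho, he⟩
      have hij : i ≠ j := ho.ne
      rcases hedge i j (by simp [ho]) with ⟨hi, hj⟩ | ⟨hi, hj⟩
      · rw [hA11 i j hi hj hij]
        exact ((hA₁S.2 ⟨i, hi⟩ ⟨j, hj⟩).2.1 ⟨ho, he⟩)
      · rw [hA22 i j hi hj hij]
        exact ((hBS.2 ⟨i, hi⟩ ⟨j, hj⟩).2.1 ⟨ho, he⟩)
    · rintro ⟨hij, he, ho⟩
      by_cases hi1 : i ∈ W₁ <;> by_cases hj1 : j ∈ W₁
      · rw [hA11 i j hi1 hj1 hij]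
        exact (hA₁S.2 ⟨i, hi1⟩ ⟨j, hj1⟩).2.2 ⟨fun h => hij (Subtype.ext_iff.1 h), he, ho⟩
      · have hi2 : j ∈ W₂ := (hcov j).resolve_left hj1
        by_cases hi2' : i ∈ W₂
        · rw [hA22 i j hi2' hi2 hij]
          exact (hBS.2 ⟨i, hi2'⟩ ⟨j, hi2⟩).2.2 ⟨fun h => hij (Subtype.ext_iff.1 h), he, ho⟩
        · exact hAcross i j (fun h => hj1 h.2) (fun h => hi2' h.1)
      · have hi2 : i ∈ W₂ := (hcov i).resolve_left hi1
        by_cases hj2' : j ∈ W₂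
        · rw [hA22 i j hi2 hj2' hij]
          exact (hBS.2 ⟨i, hi2⟩ ⟨j, hj2'⟩).2.2 ⟨fun h => hij (Subtype.ext_iff.1 h), he, ho⟩
        · exact hAcross i j (fun h => hi1 h.1) (fun h => hj2' h.2)
      · have hi2 : i ∈ W₂ := (hcov i).resolve_left hi1
        have hj2 : j ∈ W₂ := (hcov j).resolve_left hj1
        rw [hA22 i j hi2 hj2 hij]
        exact (hBS.2 ⟨i, hi2⟩ ⟨j, hj2⟩).2.2 ⟨fun h => hij (Subtype.ext_iff.1 h), he, ho⟩
  -- nullity of A equals nullity of A₁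
  have hle1 : matNullity A₁ ≤ matNullity A := by
    refine nullity_le_of_inj
      { toFun := fun x => fun i =>
          if h : i ∈ W₁ then x ⟨i, h⟩
          else (x ⟨v, hv₁⟩ / y ⟨v, hv₂⟩) * y ⟨i, (hcov i).resolve_left h⟩
        map_add' := by
          intro a b
          funext i
          by_cases h : i ∈ W₁
          · simp only [dif_pos h, Pi.add_apply]
          · simp only [dif_neg h, Pi.add_apply]
            ring
        map_smul' := by
          intro c a
          funext i
          by_cases h : i ∈ W₁
          · simp only [dif_pos h, Pi.smul_apply, smul_eq_mul, RingHom.id_apply]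
          · simp only [dif_neg h, Pi.smul_apply, smul_eq_mul, RingHom.id_apply]
            ring } ?_ ?_
    · intro x hx
      rw [hsplit]
      constructor
      · have : res W₁ (fun i => if h : i ∈ W₁ then x ⟨i, h⟩
            else (x ⟨v, hv₁⟩ / y ⟨v, hv₂⟩) * y ⟨i, (hcov i).resolve_left h⟩) = x := by
          funext i
          simp only [res, dif_pos i.2]
        rw [LinearMap.coe_mk, AddHom.coe_mk, this]
        exact hx
      · have : res W₂ (fun i => if h : i ∈ W₁ then x ⟨i, h⟩
            else (x ⟨v, hv₁⟩ / y ⟨v, hv₂⟩) * y ⟨i, (hcov i).resolve_left h⟩)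
            = (x ⟨v, hv₁⟩ / y ⟨v, hv₂⟩) • y := by
          funext i
          simp only [res, Pi.smul_apply, smul_eq_mul]
          by_cases h : i.1 ∈ W₁
          · have hiv : i = ⟨v, hv₂⟩ := Subtype.ext (hint i.1 h i.2)
            subst hiv
            rw [dif_pos h]
            rw [div_mul_cancel₀ _ hyv]
          · rw [dif_neg h]
        rw [LinearMap.coe_mk, AddHom.coe_mk, this, Matrix.mulVec_smul, hBy, smul_zero]
    · intro x _ hx0
      funext i
      have := congrFun hx0 i.1
      simpa only [LinearMap.coe_mk, AddHom.coe_mk, dif_pos i.2, Subtype.coe_eta,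
        Pi.zero_apply] using this
  have hle2 : matNullity A ≤ matNullity A₁ := by
    refine nullity_le_of_inj (LinearMap.funLeft ℝ ℝ (Subtype.val : {a // a ∈ W₁} → V)) ?_ ?_
    · intro x hx
      exact ((hsplit x).1 hx).1
    · intro x hx hres
      have h2 := ((hsplit x).1 hx).2
      obtain ⟨c, hc⟩ := hker _ h2
      have hxv : x v = 0 := congrFun hres (⟨v, hv₁⟩ : {a // a ∈ W₁})
      have hc0 : c = 0 := by
        have := congrFun hc ⟨v, hv₂⟩
        simp only [res, Pi.smul_apply, smul_eq_mul] at this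
        rw [hxv] at this
        rcases mul_eq_zero.1 this.symm with h | h
        · exact h
        · exact absurd h hyv
      funext i
      rcases hcov i with h | h
      · exact congrFun hres (⟨i, h⟩ : {a // a ∈ W₁})
      · have := congrFun hc ⟨i, h⟩
        simp only [res, hc0, Pi.smul_apply, smul_eq_mul, zero_mul] at this
        exact this
  -- A has SAP
  have hAsap : HasSAP Ge Go A := by
    intro X hXsym hXzero hAX
    have hXs : ∀ i j, X j i = X i j := fun i j => hXsym.apply i j
    have hcol := fun j => (hsplit (fun k => X k j)).1 (cols_ker hAX j)
    -- step 1 : column v vanishes on W₂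
    have step1 : ∀ i : V, i ∈ W₂ → X i v = 0 := by
      obtain ⟨c, hc⟩ := hker _ (hcol v).2
      have hXvv : X v v = 0 := hXzero v v (Or.inl rfl)
      have hc0 : c = 0 := by
        have := congrFun hc ⟨v, hv₂⟩
        simp only [res, Pi.smul_apply, smul_eq_mul] at this
        rw [hXvv] at this
        rcases mul_eq_zero.1 this.symm with h | h
        · exact h
        · exact absurd h hyv
      intro i hi
      have := congrFun hc ⟨i, hi⟩
      simpa only [res, hc0, Pi.smul_apply, smul_eq_mul, zero_mul] using this
    -- step 2 : X vanishes on W₁ × W₁ by SAP of A₁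
    have step2 : ∀ (i j : V), i ∈ W₁ → j ∈ W₁ → X i j = 0 := by
      have hY := hA₁sap (Matrix.of fun i j : {a // a ∈ W₁} => X i.1 j.1) ?_ ?_ ?_
      · intro i j hi hj
        exact congrFun (congrFun hY ⟨i, hi⟩) ⟨j, hj⟩
      · funext i j
        simp only [Matrix.transpose_apply, Matrix.of_apply]
        exact hXs i.1 j.1
      · intro i j hij
        refine hXzero i.1 j.1 ?_
        rcases hij with h | h
        · exact Or.inl (Subtype.ext_iff.1 h)
        · rcases h with h | h
          · exact Or.inr (by simp only [SimpleGraph.sup_adj]; exact Or.inl h)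
          · exact Or.inr (by simp only [SimpleGraph.sup_adj]; exact Or.inr h)
      · funext i j
        have := congrFun (hcol j.1).1 i
        simpa only [Matrix.mul_apply, Matrix.mulVec, dotProduct, res, Matrix.of_apply,
          Pi.zero_apply, Matrix.zero_apply] using this
    -- step 3 : every column vanishes on W₂
    have step3 : ∀ (i j : V), i ∈ W₂ → X i j = 0 := by
      intro i j hi
      obtain ⟨c, hc⟩ := hker _ (hcol j).2
      have hXvj : X v j = 0 := by
        rcases hcov j with h | h
        · exact step2 v j hv₁ h
        · rw [hXs]
          exact step1 j h
      have hc0 : c = 0 := by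
        have := congrFun hc ⟨v, hv₂⟩
        simp only [res, Pi.smul_apply, smul_eq_mul] at this
        rw [hXvj] at this
        rcases mul_eq_zero.1 this.symm with h | h
        · exact h
        · exact absurd h hyv
      have := congrFun hc ⟨i, hi⟩
      simpa only [res, hc0, Pi.smul_apply, smul_eq_mul, zero_mul] using this
    funext i j
    rcases hcov i with hi | hi
    · rcases hcov j with hj | hj
      · exact step2 i j hi hj
      · rw [hXs]
        exact step3 j i hj
    · exact step3 i j hi
  exact le_csSup (bddAbove_nuset Ge Go)
    ⟨A, hAS, hApsd, hAsap, le_antisymm hle2 hle1⟩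


lemma mul_eq_zero_of_cols {n : Type*} [Fintype n] {A X : Matrix n n ℝ}
    (h : ∀ j, A *ᵥ (fun k => X k j) = 0) : A * X = 0 := by
  funext i j
  have := congrFun (h j) i
  simpa [Matrix.mul_apply, Matrix.mulVec, dotProduct] using this

lemma single_mulVec {m : Type*} [Fintype m] [DecidableEq m] (w : m) (x : m → ℝ) :
    Matrix.vecMulVec (Pi.single w (1:ℝ)) (Pi.single w 1) *ᵥ x
      = (x w) • (Pi.single w 1 : m → ℝ) := by
  funext i
  simp only [Matrix.mulVec, dotProduct, Matrix.vecMulVec_apply, Pi.smul_apply, smul_eq_mul]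
  rw [Finset.sum_eq_single w]
  · simp [mul_comm]
  · intro j _ hj
    rw [Pi.single_eq_of_ne hj]
    ring
  · intro h
    exact absurd (Finset.mem_univ w) h

lemma single_psd {m : Type*} [Fintype m] [DecidableEq m] (w : m) :
    (Matrix.vecMulVec (Pi.single w (1:ℝ)) (Pi.single w 1)).PosSemidef := by
  refine Matrix.PosSemidef.of_dotProduct_mulVec_nonneg ?_ ?_
  · funext i j
    simp only [conjTranspose_apply, star_trivial, Matrix.vecMulVec_apply]
    ring
  · intro x
    rw [single_mulVec]
    simp only [star_trivial, dotProduct_smul, smul_eq_mul]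
    have : x ⬝ᵥ (Pi.single w 1 : m → ℝ) = x w := by simp [dotProduct, Pi.single_apply]
    rw [this]
    exact mul_self_nonneg _

/-- membership of a compressed matrix in the induced signed set -/
lemma Smem_sub (Ge Go : SimpleGraph V) (W : Finset V) {A : Matrix V V ℝ}
    (hAS : A ∈ SignedSet Ge Go) {B : Matrix {a // a ∈ W} {a // a ∈ W} ℝ}
    (hsym : B.IsSymm) (hoff : ∀ i j : {a // a ∈ W}, i.1 ≠ j.1 → B i j = A i.1 j.1) :
    B ∈ SignedSet (Ge.comap (Subtype.val : {x // x ∈ W} → V))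
      (Go.comap (Subtype.val : {x // x ∈ W} → V)) := by
  refine ⟨hsym, ?_⟩
  intro i j
  simp only [SimpleGraph.comap_adj]
  refine ⟨?_, ?_, ?_⟩
  · rintro ⟨he, ho⟩
    rw [hoff i j he.ne]
    exact (hAS.2 i.1 j.1).1 ⟨he, ho⟩
  · rintro ⟨ho, he⟩
    rw [hoff i j ho.ne]
    exact (hAS.2 i.1 j.1).2.1 ⟨ho, he⟩
  · rintro ⟨hij, he, ho⟩
    have hij' : i.1 ≠ j.1 := fun h => hij (Subtype.ext h)
    rw [hoff i j hij']
    exact (hAS.2 i.1 j.1).2.2 ⟨hij', he, ho⟩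

/-- the dichotomy forced by SAP at a 1-separation -/
lemma sap_dichotomy (Ge Go : SimpleGraph V) (W₁ W₂ : Finset V) (v : V)
    (hv₁ : v ∈ W₁) (hv₂ : v ∈ W₂)
    (hint : ∀ a, a ∈ W₁ → a ∈ W₂ → a = v)
    (hedge : ∀ i j, (Ge ⊔ Go).Adj i j → ((i ∈ W₁ ∧ j ∈ W₁) ∨ (i ∈ W₂ ∧ j ∈ W₂)))
    {A : Matrix V V ℝ} (hAsap : HasSAP Ge Go A)
    {B₁ : Matrix {a // a ∈ W₁} {a // a ∈ W₁} ℝ} {B₂ : Matrix {a // a ∈ W₂} {a // a ∈ W₂} ℝ}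
    (hB₁psd : B₁.PosSemidef) (hB₂psd : B₂.PosSemidef)
    (hsum : mExt W₁ B₁ + mExt W₂ B₂ = A) :
    (∀ x, B₁ *ᵥ x = 0 → x ⟨v, hv₁⟩ = 0 → x = 0) ∨
    (∀ x, B₂ *ᵥ x = 0 → x ⟨v, hv₂⟩ = 0 → x = 0) := by
  classical
  by_contra hcon
  push_neg at hcon
  obtain ⟨⟨x₁, hx₁k, hx₁v, hx₁⟩, ⟨x₂, hx₂k, hx₂v, hx₂⟩⟩ := hcon
  have hsplit : ∀ x : V → ℝ, A *ᵥ x = 0 ↔ B₁ *ᵥ res W₁ x = 0 ∧ B₂ *ᵥ res W₂ x = 0 :=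
    ker_split hB₁psd hB₂psd hsum
  set e₁ : V → ℝ := ext W₁ x₁ with he₁def
  set e₂ : V → ℝ := ext W₂ x₂ with he₂def
  have he₁v : e₁ v = 0 := by rw [he₁def, ext_apply_mem W₁ x₁ hv₁]; exact hx₁v
  have he₂v : e₂ v = 0 := by rw [he₂def, ext_apply_mem W₂ x₂ hv₂]; exact hx₂v
  have hsupp₁ : ∀ i : V, e₁ i ≠ 0 → i ∈ W₁ ∧ i ≠ v := by
    intro i hi
    by_cases h : i ∈ W₁
    · exact ⟨h, fun hv => hi (hv ▸ he₁v)⟩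
    · exact absurd (by simp [he₁def, ext, h]) hi
  have hsupp₂ : ∀ i : V, e₂ i ≠ 0 → i ∈ W₂ ∧ i ≠ v := by
    intro i hi
    by_cases h : i ∈ W₂
    · exact ⟨h, fun hv => hi (hv ▸ he₂v)⟩
    · exact absurd (by simp [he₂def, ext, h]) hi
  have he₁ker : A *ᵥ e₁ = 0 := by
    rw [hsplit]
    constructor
    · rw [he₁def, res_ext]; exact hx₁k
    · have : res W₂ e₁ = 0 := by
        funext k
        by_contra hk
        obtain ⟨h1, h2⟩ := hsupp₁ k.1 hk
        exact h2 (hint k.1 h1 k.2)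
      rw [this, Matrix.mulVec_zero]
  have he₂ker : A *ᵥ e₂ = 0 := by
    rw [hsplit]
    constructor
    · have : res W₁ e₂ = 0 := by
        funext k
        by_contra hk
        obtain ⟨h1, h2⟩ := hsupp₂ k.1 hk
        exact h2 (hint k.1 k.2 h1)
      rw [this, Matrix.mulVec_zero]
    · rw [he₂def, res_ext]; exact hx₂k
  -- the SAP witness
  set X : Matrix V V ℝ := Matrix.of fun i j => e₁ i * e₂ j + e₂ i * e₁ j with hXdef
  have hX0 : X = 0 := by
    refine hAsap X ?_ ?_ ?_
    · funext i j
      simp only [Matrix.transpose_apply, hXdef, Matrix.of_apply]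
      ring
    · intro i j hij
      have hkey : ∀ a b : V, ((a ∈ W₁ ∧ b ∈ W₁) ∨ (a ∈ W₂ ∧ b ∈ W₂)) → a ≠ v →
          e₁ a * e₂ b + e₂ a * e₁ b = 0 → True := fun _ _ _ _ _ => trivial
      rcases hij with rfl | hadj
      · simp only [hXdef, Matrix.of_apply]
        by_cases h1 : e₁ i = 0
        · by_cases h2 : e₂ i = 0
          · rw [h1, h2]; ring
          · obtain ⟨hw2, hnv⟩ := hsupp₂ i h2
            have : e₁ i = 0 := by
              by_contra h
              exact hnv (hint i (hsupp₁ i h).1 hw2)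
            rw [this]; ring
        · obtain ⟨hw1, hnv⟩ := hsupp₁ i h1
          have : e₂ i = 0 := by
            by_contra h
            exact hnv (hint i hw1 (hsupp₂ i h).1)
          rw [this]; ring
      · simp only [hXdef, Matrix.of_apply]
        rcases hedge i j hadj with ⟨hi, hj⟩ | ⟨hi, hj⟩
        · have h2i : e₂ i = 0 := by
            by_contra h
            obtain ⟨hw2, hnv⟩ := hsupp₂ i h
            exact hnv (hint i hi hw2)
          have h2j : e₂ j = 0 := by
            by_contra h
            obtain ⟨hw2, hnv⟩ := hsupp₂ j h
            exact hnv (hint j hj hw2)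
          rw [h2i, h2j]; ring
        · have h1i : e₁ i = 0 := by
            by_contra h
            obtain ⟨hw1, hnv⟩ := hsupp₁ i h
            exact hnv (hint i hw1 hi)
          have h1j : e₁ j = 0 := by
            by_contra h
            obtain ⟨hw1, hnv⟩ := hsupp₁ j h
            exact hnv (hint j hw1 hj)
          rw [h1i, h1j]; ring
    · refine mul_eq_zero_of_cols ?_
      intro j
      have : (fun k => X k j) = (e₂ j) • e₁ + (e₁ j) • e₂ := by
        funext k
        simp only [hXdef, Matrix.of_apply, Pi.add_apply, Pi.smul_apply, smul_eq_mul]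
        ring
      rw [this, Matrix.mulVec_add, Matrix.mulVec_smul, Matrix.mulVec_smul, he₁ker, he₂ker,
        smul_zero, smul_zero, add_zero]
  -- contradiction
  obtain ⟨i₀, hi₀⟩ := Function.ne_iff.1 hx₁
  obtain ⟨j₀, hj₀⟩ := Function.ne_iff.1 hx₂
  simp only [Pi.zero_apply] at hi₀ hj₀
  have he₁i₀ : e₁ i₀.1 = x₁ i₀ := by
    rw [he₁def, ext_apply_mem W₁ x₁ i₀.2]
  have he₂j₀ : e₂ j₀.1 = x₂ j₀ := by
    rw [he₂def, ext_apply_mem W₂ x₂ j₀.2]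
  have hi₀v : i₀.1 ≠ v := by
    intro h
    apply hi₀
    have : i₀ = ⟨v, hv₁⟩ := Subtype.ext h
    rw [this]; exact hx₁v
  have hj₀v : j₀.1 ≠ v := by
    intro h
    apply hj₀
    have : j₀ = ⟨v, hv₂⟩ := Subtype.ext h
    rw [this]; exact hx₂v
  have h2i₀ : e₂ i₀.1 = 0 := by
    by_contra h
    exact hi₀v (hint i₀.1 i₀.2 (hsupp₂ i₀.1 h).1)
  have h1j₀ : e₁ j₀.1 = 0 := by
    by_contra h
    exact hj₀v (hint j₀.1 (hsupp₁ j₀.1 h).1 j₀.2)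
  have := congrFun (congrFun hX0 i₀.1) j₀.1
  simp only [hXdef, Matrix.of_apply, Matrix.zero_apply, h2i₀, h1j₀, he₁i₀, he₂j₀,
    mul_zero, zero_mul, add_zero, zero_add] at this
  rcases mul_eq_zero.1 this with h | h
  · exact hi₀ h
  · exact hj₀ h


/-- the hard direction at a 1-separation: if the kernel of the second part is transversal
to the coordinate at `v`, then the nullity of `A` is attained on side 1. -/
lemma nu_le_side (Ge Go : SimpleGraph V) (W₁ W₂ : Finset V) (v : V)
    (hv₁ : v ∈ W₁) (hv₂ : v ∈ W₂)
    (hint : ∀ a, a ∈ W₁ → a ∈ W₂ → a = v)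
    (hcov : ∀ a : V, a ∈ W₁ ∨ a ∈ W₂)
    (hedge : ∀ i j, (Ge ⊔ Go).Adj i j → ((i ∈ W₁ ∧ j ∈ W₁) ∨ (i ∈ W₂ ∧ j ∈ W₂)))
    {A : Matrix V V ℝ} (hAS : A ∈ SignedSet Ge Go) (hAsap : HasSAP Ge Go A)
    {B₁ : Matrix {a // a ∈ W₁} {a // a ∈ W₁} ℝ} {B₂ : Matrix {a // a ∈ W₂} {a // a ∈ W₂} ℝ}
    (hB₁psd : B₁.PosSemidef) (hB₂psd : B₂.PosSemidef)
    (hB₁off : ∀ i j : {a // a ∈ W₁}, i.1 ≠ j.1 → B₁ i j = A i.1 j.1)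
    (hsum : mExt W₁ B₁ + mExt W₂ B₂ = A)
    (hker₂ : ∀ x, B₂ *ᵥ x = 0 → x ⟨v, hv₂⟩ = 0 → x = 0) :
    matNullity A ≤ nuSigned (Ge.comap (Subtype.val : {x // x ∈ W₁} → V))
      (Go.comap (Subtype.val : {x // x ∈ W₁} → V)) := by
  classical
  have hsplit : ∀ x : V → ℝ, A *ᵥ x = 0 ↔ B₁ *ᵥ res W₁ x = 0 ∧ B₂ *ᵥ res W₂ x = 0 :=
    ker_split hB₁psd hB₂psd hsum
  -- the common injectivity argument
  have hinj : ∀ x : V → ℝ, A *ᵥ x = 0 →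
      LinearMap.funLeft ℝ ℝ (Subtype.val : {a // a ∈ W₁} → V) x = 0 → x = 0 := by
    intro x hx hres
    have h2 := ((hsplit x).1 hx).2
    have hxv : x v = 0 := congrFun hres (⟨v, hv₁⟩ : {a // a ∈ W₁})
    have hres2 : res W₂ x = 0 := hker₂ _ h2 hxv
    funext i
    rcases hcov i with h | h
    · exact congrFun hres (⟨i, h⟩ : {a // a ∈ W₁})
    · exact congrFun hres2 (⟨i, h⟩ : {a // a ∈ W₂})
  by_cases hz : ∃ z : {a // a ∈ W₂} → ℝ, B₂ *ᵥ z = 0 ∧ z ⟨v, hv₂⟩ = 1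
  · -- side 2 has a kernel vector with nonzero value at v; use B₁ itself
    obtain ⟨z, hzk, hzv⟩ := hz
    -- B₁ has SAP
    have hsap : HasSAP (Ge.comap (Subtype.val : {x // x ∈ W₁} → V))
        (Go.comap (Subtype.val : {x // x ∈ W₁} → V)) B₁ := by
      intro Y hYsym hYzero hBY
      have hYs : ∀ i j, Y j i = Y i j := fun i j => hYsym.apply i j
      have hYdiag : ∀ i, Y i i = 0 := fun i => hYzero i i (Or.inl rfl)
      have hYcol := fun (j : {a // a ∈ W₁}) => cols_ker hBY j
      set X : Matrix V V ℝ := Matrix.of fun i j =>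
        if hi : i ∈ W₁ then
          (if hj : j ∈ W₁ then Y ⟨i, hi⟩ ⟨j, hj⟩
           else Y ⟨i, hi⟩ ⟨v, hv₁⟩ * z ⟨j, (hcov j).resolve_left hj⟩)
        else
          (if hj : j ∈ W₁ then z ⟨i, (hcov i).resolve_left hi⟩ * Y ⟨v, hv₁⟩ ⟨j, hj⟩ else 0)
        with hXdef
      have hX0 : X = 0 := by
        refine hAsap X ?_ ?_ ?_
        · funext i j
          simp only [Matrix.transpose_apply, hXdef, Matrix.of_apply]
          by_cases hi : i ∈ W₁ <;> by_cases hj : j ∈ W₁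
          · rw [dif_pos hi, dif_pos hj, dif_pos hi, dif_pos hj, hYs]
          · rw [dif_pos hi, dif_neg hj, dif_neg hj, dif_pos hi, hYs]
            ring
          · rw [dif_neg hi, dif_pos hj, dif_pos hj, dif_neg hi, hYs]
            ring
          · rw [dif_neg hi, dif_neg hj, dif_neg hj, dif_neg hi]
        · intro i j hij
          rcases hij with rfl | hadj
          · simp only [hXdef, Matrix.of_apply]
            by_cases hi : i ∈ W₁
            · rw [dif_pos hi, dif_pos hi]
              exact hYdiag _
            · rw [dif_neg hi, dif_neg hi]
          · simp only [hXdef, Matrix.of_apply]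
            rcases hedge i j hadj with ⟨hi, hj⟩ | ⟨hi, hj⟩
            · rw [dif_pos hi, dif_pos hj]
              refine hYzero _ _ (Or.inr ?_)
              simp only [SimpleGraph.sup_adj, SimpleGraph.comap_adj] at hadj ⊢
              exact hadj
            · by_cases hi1 : i ∈ W₁
              · have hiv : i = v := hint i hi1 hi
                rw [dif_pos hi1]
                by_cases hj1 : j ∈ W₁
                · have hjv : j = v := hint j hj1 hj
                  exact absurd (hiv.trans hjv.symm) hadj.ne
                · rw [dif_neg hj1]
                  have : (⟨i, hi1⟩ : {a // a ∈ W₁}) = ⟨v, hv₁⟩ := Subtype.ext hiv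
                  rw [this, hYdiag, zero_mul]
              · rw [dif_neg hi1]
                by_cases hj1 : j ∈ W₁
                · have hjv : j = v := hint j hj1 hj
                  rw [dif_pos hj1]
                  have : (⟨j, hj1⟩ : {a // a ∈ W₁}) = ⟨v, hv₁⟩ := Subtype.ext hjv
                  rw [this, hYdiag, mul_zero]
                · rw [dif_neg hj1]
        · refine mul_eq_zero_of_cols ?_
          intro j
          rw [hsplit]
          by_cases hj : j ∈ W₁
          · constructor
            · have hr : res W₁ (fun k => X k j) = (fun k => Y k ⟨j, hj⟩) := by
                funext k
                simp only [res, hXdef, Matrix.of_apply, dif_pos k.2, dif_pos hj,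
                  Subtype.coe_eta]
              rw [hr]
              exact hYcol ⟨j, hj⟩
            · have hr : res W₂ (fun k => X k j) = (Y ⟨v, hv₁⟩ ⟨j, hj⟩) • z := by
                funext k
                simp only [res, hXdef, Matrix.of_apply, Pi.smul_apply, smul_eq_mul]
                by_cases hk : k.1 ∈ W₁
                · rw [dif_pos hk, dif_pos hj]
                  have hkv : k.1 = v := hint k.1 hk k.2
                  have h1 : (⟨k.1, hk⟩ : {a // a ∈ W₁}) = ⟨v, hv₁⟩ := Subtype.ext hkv
                  have h2 : k = ⟨v, hv₂⟩ := Subtype.ext hkv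
                  rw [h1, h2, hYs, hzv, mul_one]
                · rw [dif_neg hk, dif_pos hj]
                  have : (⟨k.1, (hcov k.1).resolve_left hk⟩ : {a // a ∈ W₂}) = k :=
                    Subtype.ext rfl
                  rw [this, hYs]
                  ring
              rw [hr, Matrix.mulVec_smul, hzk, smul_zero]
          · constructor
            · have hr : res W₁ (fun k => X k j)
                  = (z ⟨j, (hcov j).resolve_left hj⟩) • (fun k => Y k ⟨v, hv₁⟩) := by
                funext k
                simp only [res, hXdef, Matrix.of_apply, dif_pos k.2, dif_neg hj,
                  Pi.smul_apply, smul_eq_mul, Subtype.coe_eta]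
                ring
              rw [hr, Matrix.mulVec_smul, hYcol ⟨v, hv₁⟩, smul_zero]
            · have hr : res W₂ (fun k => X k j) = 0 := by
                funext k
                simp only [res, hXdef, Matrix.of_apply, Pi.zero_apply]
                by_cases hk : k.1 ∈ W₁
                · rw [dif_pos hk, dif_neg hj]
                  have hkv : k.1 = v := hint k.1 hk k.2
                  have h1 : (⟨k.1, hk⟩ : {a // a ∈ W₁}) = ⟨v, hv₁⟩ := Subtype.ext hkv
                  rw [h1, hYdiag, zero_mul]
                · rw [dif_neg hk, dif_neg hj]
              rw [hr, Matrix.mulVec_zero]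
      funext i j
      have := congrFun (congrFun hX0 i.1) j.1
      simpa only [hXdef, Matrix.of_apply, dif_pos i.2, dif_pos j.2, Subtype.coe_eta,
        Matrix.zero_apply] using this
    have hnull : matNullity A ≤ matNullity B₁ := by
      refine nullity_le_of_inj (LinearMap.funLeft ℝ ℝ (Subtype.val : {a // a ∈ W₁} → V))
        (fun x hx => ((hsplit x).1 hx).1) hinj
    refine le_trans hnull (le_csSup (bddAbove_nuset _ _) ?_)
    exact ⟨B₁, Smem_sub Ge Go W₁ hAS (psd_isSymm hB₁psd) hB₁off, hB₁psd, hsap, rfl⟩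
  · -- side 2 has trivial kernel; use B₁ plus a rank-one bump at v
    have hK₂0 : ∀ x, B₂ *ᵥ x = 0 → x = 0 := by
      intro x hx
      refine hker₂ x hx ?_
      by_contra h
      exact hz ⟨(x ⟨v, hv₂⟩)⁻¹ • x, by rw [Matrix.mulVec_smul, hx, smul_zero],
        by simp [inv_mul_cancel₀ h]⟩
    set E : Matrix {a // a ∈ W₁} {a // a ∈ W₁} ℝ :=
      Matrix.vecMulVec (Pi.single ⟨v, hv₁⟩ 1) (Pi.single ⟨v, hv₁⟩ 1) with hEdef
    set B₁' : Matrix {a // a ∈ W₁} {a // a ∈ W₁} ℝ := B₁ + E with hB₁'def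
    have hB₁'psd : B₁'.PosSemidef := hB₁psd.add (single_psd _)
    have hEoff : ∀ i j : {a // a ∈ W₁}, i ≠ j → E i j = 0 := by
      intro i j hij
      simp only [hEdef, Matrix.vecMulVec_apply]
      by_cases hi : i = ⟨v, hv₁⟩
      · have hj : j ≠ ⟨v, hv₁⟩ := fun h => hij (hi.trans h.symm)
        rw [Pi.single_eq_of_ne hj, mul_zero]
      · rw [Pi.single_eq_of_ne hi, zero_mul]
    have hB₁'ker : ∀ x, B₁' *ᵥ x = 0 ↔ (B₁ *ᵥ x = 0 ∧ x ⟨v, hv₁⟩ = 0) := by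
      intro x
      constructor
      · intro h
        have hq : x ⬝ᵥ B₁ *ᵥ x + x ⟨v, hv₁⟩ * x ⟨v, hv₁⟩ = 0 := by
          have h0 : x ⬝ᵥ B₁' *ᵥ x = 0 := by rw [h, dotProduct_zero]
          rw [hB₁'def, Matrix.add_mulVec, dotProduct_add] at h0
          rw [← h0]
          congr 1
          rw [hEdef, single_mulVec, dotProduct_smul, smul_eq_mul]
          have : x ⬝ᵥ (Pi.single (⟨v, hv₁⟩ : {a // a ∈ W₁}) 1 : {a // a ∈ W₁} → ℝ)
              = x ⟨v, hv₁⟩ := by simp [dotProduct, Pi.single_apply]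
          rw [this]
        have h1 := hB₁psd.dotProduct_mulVec_nonneg x
        simp only [star_trivial] at h1
        have hxv : x ⟨v, hv₁⟩ = 0 := by nlinarith [mul_self_nonneg (x ⟨v, hv₁⟩)]
        refine ⟨psd_dot_zero hB₁psd (by nlinarith), hxv⟩
      · rintro ⟨h1, h2⟩
        rw [hB₁'def, Matrix.add_mulVec, h1, zero_add, hEdef, single_mulVec, h2, zero_smul]
    have hsap : HasSAP (Ge.comap (Subtype.val : {x // x ∈ W₁} → V))
        (Go.comap (Subtype.val : {x // x ∈ W₁} → V)) B₁' := by
      intro Y hYsym hYzero hBY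
      have hYcol : ∀ j : {a // a ∈ W₁}, B₁ *ᵥ (fun k => Y k j) = 0 ∧ Y ⟨v, hv₁⟩ j = 0 :=
        fun j => (hB₁'ker _).1 (cols_ker hBY j)
      set X : Matrix V V ℝ := mExt W₁ Y with hXdef
      have hX0 : X = 0 := by
        refine hAsap X ?_ ?_ ?_
        · funext i j
          simp only [Matrix.transpose_apply]
          by_cases hi : i ∈ W₁ <;> by_cases hj : j ∈ W₁
          · rw [hXdef, mExt_apply_mem W₁ Y hi hj, mExt_apply_mem W₁ Y hj hi]
            exact hYsym.apply _ _
          · rw [hXdef, mExt_apply_not_left W₁ Y i hj, mExt_apply_not_right W₁ Y i hj]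
          · rw [hXdef, mExt_apply_not_right W₁ Y j hi, mExt_apply_not_left W₁ Y j hi]
          · rw [hXdef, mExt_apply_not_left W₁ Y i hj, mExt_apply_not_left W₁ Y j hi]
        · intro i j hij
          by_cases hi : i ∈ W₁
          · by_cases hj : j ∈ W₁
            · rw [hXdef, mExt_apply_mem W₁ Y hi hj]
              refine hYzero ⟨i, hi⟩ ⟨j, hj⟩ ?_
              rcases hij with rfl | hadj
              · exact Or.inl rfl
              · refine Or.inr ?_
                simp only [SimpleGraph.sup_adj, SimpleGraph.comap_adj] at hadj ⊢
                exact hadj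
            · rw [hXdef, mExt_apply_not_right W₁ Y i hj]
          · rw [hXdef, mExt_apply_not_left W₁ Y j hi]
        · refine mul_eq_zero_of_cols ?_
          intro j
          rw [hsplit]
          by_cases hj : j ∈ W₁
          · constructor
            · have hr : res W₁ (fun k => X k j) = (fun k => Y k ⟨j, hj⟩) := by
                funext k
                simp only [res, hXdef, mExt_apply_mem W₁ Y k.2 hj, Subtype.coe_eta]
              rw [hr]
              exact (hYcol ⟨j, hj⟩).1
            · have hr : res W₂ (fun k => X k j) = 0 := by
                funext k
                simp only [res, Pi.zero_apply]
                by_cases hk : k.1 ∈ W₁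
                · rw [hXdef, mExt_apply_mem W₁ Y hk hj]
                  have hkv : k.1 = v := hint k.1 hk k.2
                  have h1 : (⟨k.1, hk⟩ : {a // a ∈ W₁}) = ⟨v, hv₁⟩ := Subtype.ext hkv
                  rw [h1]
                  exact (hYcol ⟨j, hj⟩).2
                · rw [hXdef, mExt_apply_not_left W₁ Y j hk]
              rw [hr, Matrix.mulVec_zero]
          · have hzero : (fun k => X k j) = 0 := by
              funext k
              rw [hXdef, mExt_apply_not_right W₁ Y k hj]
              rfl
            rw [hzero]
            constructor
            · have : res W₁ (0 : V → ℝ) = 0 := rfl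
              rw [this, Matrix.mulVec_zero]
            · have : res W₂ (0 : V → ℝ) = 0 := rfl
              rw [this, Matrix.mulVec_zero]
      funext i j
      have := congrFun (congrFun hX0 i.1) j.1
      simpa only [hXdef, mExt_apply_mem W₁ Y i.2 j.2, Subtype.coe_eta,
        Matrix.zero_apply] using this
    have hnull : matNullity A ≤ matNullity B₁' := by
      refine nullity_le_of_inj (LinearMap.funLeft ℝ ℝ (Subtype.val : {a // a ∈ W₁} → V))
        ?_ hinj
      intro x hx
      rw [hB₁'ker]
      obtain ⟨h1, h2⟩ := (hsplit x).1 hx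
      have hres2 : res W₂ x = 0 := hK₂0 _ h2
      refine ⟨h1, ?_⟩
      have : x v = 0 := congrFun hres2 (⟨v, hv₂⟩ : {a // a ∈ W₂})
      exact this
    have hoff' : ∀ i j : {a // a ∈ W₁}, i.1 ≠ j.1 → B₁' i j = A i.1 j.1 := by
      intro i j hij
      rw [hB₁'def, Matrix.add_apply, hEoff i j (fun h => hij (congrArg Subtype.val h)),
        add_zero]
      exact hB₁off i j hij
    refine le_trans hnull (le_csSup (bddAbove_nuset _ _) ?_)
    exact ⟨B₁', Smem_sub Ge Go W₁ hAS (psd_isSymm hB₁'psd) hoff', hB₁'psd, hsap, rfl⟩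

end Stmt11Aux

open Stmt11Aux in
/-- 1-split: if `V = V₁ ∪ V₂` with `V₁ ∩ V₂ = {v}` and every edge lies
within `V₁` or within `V₂`, then `ν` is the maximum of the `ν`'s of the two induced
signed graphs. -/
theorem stmt11 {V : Type*} [Fintype V] [DecidableEq V]
    (Ge Go : SimpleGraph V) (V₁ V₂ : Finset V) (v : V)
    (hunion : V₁ ∪ V₂ = Finset.univ) (hinter : V₁ ∩ V₂ = {v})
    (hedges : ∀ i j, (Ge ⊔ Go).Adj i j → ((i ∈ V₁ ∧ j ∈ V₁) ∨ (i ∈ V₂ ∧ j ∈ V₂))) :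
    nuSigned Ge Go =
      max (nuSigned (Ge.comap (Subtype.val : {x // x ∈ V₁} → V))
                    (Go.comap (Subtype.val : {x // x ∈ V₁} → V)))
          (nuSigned (Ge.comap (Subtype.val : {x // x ∈ V₂} → V))
                    (Go.comap (Subtype.val : {x // x ∈ V₂} → V))) := by
  classical
  have hvmem : v ∈ V₁ ∩ V₂ := by rw [hinter]; exact Finset.mem_singleton_self v
  have hv₁ : v ∈ V₁ := (Finset.mem_inter.1 hvmem).1
  have hv₂ : v ∈ V₂ := (Finset.mem_inter.1 hvmem).2
  have hint : ∀ a, a ∈ V₁ → a ∈ V₂ → a = v := by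
    intro a h1 h2
    have : a ∈ V₁ ∩ V₂ := Finset.mem_inter.2 ⟨h1, h2⟩
    rwa [hinter, Finset.mem_singleton] at this
  have hcov : ∀ a : V, a ∈ V₁ ∨ a ∈ V₂ := by
    intro a
    have : a ∈ V₁ ∪ V₂ := by rw [hunion]; exact Finset.mem_univ a
    exact Finset.mem_union.1 this
  apply le_antisymm
  · refine csSup_le' ?_
    rintro n ⟨A, hAS, hApsd, hAsap, rfl⟩
    have hcross : ∀ i j : V, i ∈ V₁ → i ≠ v → j ∈ V₂ → j ≠ v → A i j = 0 := by
      intro i j hi hiv hj hjv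
      have hne : i ≠ j := fun h => hiv (hint i hi (h ▸ hj))
      refine (hAS.2 i j).2.2 ⟨hne, ?_, ?_⟩
      · intro h
        rcases hedges i j ((SimpleGraph.sup_adj _ _ _ _).2 (Or.inl h)) with ⟨h1, h2⟩ | ⟨h1, h2⟩
        · exact hjv (hint j h2 hj)
        · exact hiv (hint i hi h1)
      · intro h
        rcases hedges i j ((SimpleGraph.sup_adj _ _ _ _).2 (Or.inr h)) with ⟨h1, h2⟩ | ⟨h1, h2⟩
        · exact hjv (hint j h2 hj)
        · exact hiv (hint i hi h1)
    obtain ⟨B₁, B₂, h1psd, h2psd, hsum, h1off, h2off⟩ :=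
      split_exists hApsd V₁ V₂ v hv₁ hv₂ hint hcov hcross
    rcases sap_dichotomy Ge Go V₁ V₂ v hv₁ hv₂ hint hedges hAsap h1psd h2psd hsum with
      hd | hd
    · refine le_trans (nu_le_side Ge Go V₂ V₁ v hv₂ hv₁ (fun a h2 h1 => hint a h1 h2)
        (fun a => (hcov a).symm) (fun i j h => (hedges i j h).symm) hAS hAsap h2psd h1psd
        h2off (by rw [add_comm]; exact hsum) hd) (le_max_right _ _)
    · refine le_trans (nu_le_side Ge Go V₁ V₂ v hv₁ hv₂ hint hcov hedges hAS hAsap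
        h1psd h2psd h1off hsum hd) (le_max_left _ _)
  · refine max_le ?_ ?_
    · exact nu_side_le Ge Go V₁ V₂ v hv₁ hv₂ hint hcov hedges
    · exact nu_side_le Ge Go V₂ V₁ v hv₂ hv₁ (fun a h2 h1 => hint a h1 h2)
        (fun a => (hcov a).symm) (fun i j h => (hedges i j h).symm)
end

section
/- Let (Ge, Go) be a signed graph on a finite vertex type V with at least 3 vertices. Suppose the union graph Ge ⊔ Go is 2-connected (it is connected and remains connected after deleting any single vertex), and suppose there exists a vertex v ∈ V such that the signed graph induced on V \ {v} is bipartite (i.e., (Ge, Go) is almost bipartite: v lies on every odd cycle). Then every positive semidefinite matrix A ∈ S(Ge, Go) has nullity at most 2; consequently ν(Ge, Go) ≤ M₊(Ge, Go) ≤ 2. -/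
open Matrix

lemma myKey {V : Type*} [Fintype V] [DecidableEq V]
    (G : SimpleGraph V) (v : V)
    (hconnv : (G.comap (Subtype.val : {x : V // x ≠ v} → V)).Connected)
    (B : Matrix V V ℝ)
    (hle : ∀ i j, i ≠ v → j ≠ v → i ≠ j → B i j ≤ 0)
    (hlt : ∀ i j, i ≠ v → j ≠ v → G.Adj i j → B i j < 0)
    (w : V) (hw : w ≠ v)
    (y : V → ℝ) (hy0 : ∀ i, 0 ≤ y i) (hyv : y v = 0) (hyw : y w = 0)
    (hker : B *ᵥ y = 0) : y = 0 := by
  have step : ∀ a b : V, a ≠ v → b ≠ v → G.Adj a b → y a = 0 → y b = 0 := by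
    intro a b ha hb hadj hya
    have hrow : ∑ j, B a j * y j = 0 := by
      have := congrFun hker a
      simpa [mulVec, dotProduct] using this
    have hterms : ∀ j ∈ Finset.univ, B a j * y j ≤ 0 := by
      intro j _
      by_cases hjv : j = v
      · simp [hjv, hyv]
      by_cases hja : j = a
      · simp [hja, hya]
      · exact mul_nonpos_of_nonpos_of_nonneg (hle a j ha hjv (Ne.symm hja)) (hy0 j)
    have hzero := (Finset.sum_eq_zero_iff_of_nonpos hterms).mp hrow
    have hb0 : B a b * y b = 0 := hzero b (Finset.mem_univ b)
    have hBab : B a b < 0 := hlt a b ha hb hadj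
    rcases mul_eq_zero.mp hb0 with h | h
    · exact absurd h hBab.ne
    · exact h
  funext i
  show y i = 0
  by_cases hi : i = v
  · rw [hi]; exact hyv
  obtain ⟨p⟩ := hconnv.preconnected ⟨w, hw⟩ ⟨i, hi⟩
  have main : ∀ (a b : {x : V // x ≠ v})
      (_ : ((G.comap (Subtype.val : {x : V // x ≠ v} → V))).Walk a b), y a.val = 0 → y b.val = 0 := by
    intro a b p
    induction p with
    | nil => intro h; exact h
    | cons hadj p ih =>
      rename_i c d _
      intro h
      exact ih (step c.val d.val c.2 d.2 hadj h)
  exact main ⟨w, hw⟩ ⟨i, hi⟩ p hyw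


/-- a 2-connected almost bipartite signed graph has
`ν(Ge, Go) ≤ M₊(Ge, Go) ≤ 2`: every positive semidefinite matrix in `S(Ge, Go)` has
nullity at most `2`. -/
theorem stmt14 {V : Type*} [Fintype V] [DecidableEq V]
    (Ge Go : SimpleGraph V) (hcard : 3 ≤ Fintype.card V)
    (hconn : (Ge ⊔ Go).Connected)
    (h2conn : ∀ u : V,
      ((Ge ⊔ Go).comap (Subtype.val : {x : V // x ≠ u} → V)).Connected)
    (v : V)
    (hbip : IsBalanced (Ge.comap (Subtype.val : {x : V // x ≠ v} → V))
                       (Go.comap (Subtype.val : {x : V // x ≠ v} → V))) :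
    (∀ A ∈ SignedSet Ge Go, A.PosSemidef → matNullity A ≤ 2) ∧
    nuSigned Ge Go ≤ MplusSigned Ge Go ∧ MplusSigned Ge Go ≤ 2 := by
  classical
  obtain ⟨U, hUo, hUe⟩ := hbip
  -- sign vector from the balancing set
  set s : V → ℝ := fun i => if h : i = v then 1 else
      (if (⟨i, h⟩ : {x : V // x ≠ v}) ∈ U then -1 else 1) with hs
  have hs_sq : ∀ i, s i * s i = 1 := by
    intro i
    by_cases h : i = v
    · simp [hs, h]
    · simp only [hs, dif_neg h]
      split <;> norm_num
  have hs_ne : ∀ i, s i ≠ 0 := by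
    intro i h
    have := hs_sq i
    rw [h] at this; norm_num at this
  have main : ∀ A ∈ SignedSet Ge Go, A.PosSemidef → matNullity A ≤ 2 := by
    intro A hAS hPSD
    obtain ⟨hsymm, hsign⟩ := hAS
    obtain ⟨w, hw⟩ := Fintype.exists_ne_of_one_lt_card (by omega) v
    set B : Matrix V V ℝ := diagonal s * A * diagonal s with hBdef
    have hBentry : ∀ i j, B i j = s i * (A i j * s j) := by
      intro i j
      simp [hBdef, diagonal_mul, mul_diagonal, mul_assoc]
    have hBpsd : B.PosSemidef := by
      have h1 : (diagonal s)ᴴ = diagonal s := by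
        simp [diagonal_conjTranspose]
      have := hPSD.mul_mul_conjTranspose_same (diagonal s)
      rwa [h1] at this
    -- sign lemmas
    have hprodGe : ∀ i j, i ≠ v → j ≠ v → Ge.Adj i j → s i * s j = 1 := by
      intro i j hi hj hadj
      have := hUe ⟨i, hi⟩ ⟨j, hj⟩ hadj
      simp only [hs, dif_neg hi, dif_neg hj]
      by_cases h : (⟨i, hi⟩ : {x : V // x ≠ v}) ∈ U
      · rw [if_pos h, if_pos (this.mp h)]; norm_num
      · rw [if_neg h, if_neg (fun hj' => h (this.mpr hj'))]; norm_num
    have hprodGo : ∀ i j, i ≠ v → j ≠ v → Go.Adj i j → s i * s j = -1 := by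
      intro i j hi hj hadj
      have := hUo ⟨i, hi⟩ ⟨j, hj⟩ hadj
      simp only [hs, dif_neg hi, dif_neg hj]
      by_cases h : (⟨i, hi⟩ : {x : V // x ≠ v}) ∈ U
      · rw [if_pos h, if_neg (this.mp h)]; norm_num
      · have hjU : (⟨j, hj⟩ : {x : V // x ≠ v}) ∈ U := by
          by_contra hj'
          exact h (this.mpr hj')
        rw [if_neg h, if_pos hjU]; norm_num
    have hBsign : ∀ i j, i ≠ v → j ≠ v → i ≠ j →
        B i j ≤ 0 ∧ ((Ge ⊔ Go).Adj i j → B i j < 0) := by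
      intro i j hi hj hij
      obtain ⟨h1, h2, h3⟩ := hsign i j
      by_cases hGe : Ge.Adj i j
      · by_cases hGo : Go.Adj i j
        · exfalso
          have e1 := hUe ⟨i, hi⟩ ⟨j, hj⟩ hGe
          have e2 := hUo ⟨i, hi⟩ ⟨j, hj⟩ hGo
          tauto
        · have hA := h1 ⟨hGe, hGo⟩
          have hlt : B i j < 0 := by
            rw [hBentry]
            have := hprodGe i j hi hj hGe
            nlinarith
          exact ⟨hlt.le, fun _ => hlt⟩
      · by_cases hGo : Go.Adj i j
        · have hA := h2 ⟨hGo, hGe⟩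
          have hlt : B i j < 0 := by
            rw [hBentry]
            have := hprodGo i j hi hj hGo
            nlinarith
          exact ⟨hlt.le, fun _ => hlt⟩
        · have hA := h3 ⟨hij, hGe, hGo⟩
          have h0 : B i j = 0 := by rw [hBentry, hA]; ring
          refine ⟨h0.le, fun hadj => ?_⟩
          exfalso
          rcases hadj with hadj | hadj
          · exact hGe hadj
          · exact hGo hadj
    -- the injective map into ℝ × ℝ
    have hinj : ∀ x : V → ℝ, A *ᵥ x = 0 → x v = 0 → x w = 0 → x = 0 := by
      intro x hx hxv hxw
      set z : V → ℝ := fun i => s i * x i with hzdef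
      have hz : B *ᵥ z = 0 := by
        funext i
        show ∑ j, B i j * z j = 0
        have : ∀ j, B i j * z j = s i * (A i j * x j) := by
          intro j
          rw [hBentry, hzdef]
          have := hs_sq j
          linear_combination (s i * A i j * x j) * this
        rw [Finset.sum_congr rfl (fun j _ => this j), ← Finset.mul_sum]
        have : ∑ j, A i j * x j = 0 := by
          have := congrFun hx i
          simpa [mulVec, dotProduct] using this
        rw [this, mul_zero]
      set y : V → ℝ := fun i => |z i| with hydef
      have hzv : z v = 0 := by simp [hzdef, hxv]
      have hzw : z w = 0 := by simp [hzdef, hxw]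
      have hyv : y v = 0 := by simp [hydef, hzv]
      have hyw : y w = 0 := by simp [hydef, hzw]
      have expand : ∀ u : V → ℝ, u ⬝ᵥ (B *ᵥ u) = ∑ i, ∑ j, B i j * (u i * u j) := by
        intro u
        simp only [dotProduct, mulVec, Finset.mul_sum]
        exact Finset.sum_congr rfl fun i _ => Finset.sum_congr rfl fun j _ => by ring
      have hQy_le : y ⬝ᵥ (B *ᵥ y) ≤ 0 := by
        have hQz : z ⬝ᵥ (B *ᵥ z) = 0 := by rw [hz, dotProduct_zero]
        rw [← hQz, expand y, expand z]
        refine Finset.sum_le_sum fun i _ => Finset.sum_le_sum fun j _ => ?_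
        by_cases hiv : i = v
        · simp [hydef, hiv, hzv]
        by_cases hjv : j = v
        · simp [hydef, hjv, hzv]
        by_cases hij : i = j
        · subst hij
          have : y i * y i = z i * z i := by
            simp [hydef, abs_mul_abs_self]
          rw [this]
        · have hBle : B i j ≤ 0 := (hBsign i j hiv hjv hij).1
          have hyy : z i * z j ≤ y i * y j := by
            calc z i * z j ≤ |z i * z j| := le_abs_self _
            _ = y i * y j := by rw [hydef]; simp [abs_mul]
          exact mul_le_mul_of_nonpos_left hyy hBle
      have hQy_ge : 0 ≤ y ⬝ᵥ (B *ᵥ y) := by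
        have := hBpsd.dotProduct_mulVec_nonneg y
        simpa using this
      have hQy : y ⬝ᵥ (B *ᵥ y) = 0 := le_antisymm hQy_le hQy_ge
      have hkery : B *ᵥ y = 0 := by
        have := (hBpsd.dotProduct_mulVec_zero_iff y).mp (by simpa using hQy)
        exact this
      have hy0 : y = 0 := myKey (Ge ⊔ Go) v (h2conn v) B
        (fun i j hi hj hij => (hBsign i j hi hj hij).1)
        (fun i j hi hj hadj => (hBsign i j hi hj hadj.ne).2 hadj)
        w hw y (fun i => abs_nonneg _) hyv hyw hkery
      funext i
      have : |z i| = 0 := congrFun hy0 i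
      have hz0 : z i = 0 := abs_eq_zero.mp this
      have : s i * x i = 0 := hz0
      rcases mul_eq_zero.mp this with h | h
      · exact absurd h (hs_ne i)
      · exact h
    -- conclude nullity ≤ 2
    have : matNullity A = Module.finrank ℝ (LinearMap.ker A.mulVecLin) := rfl
    rw [this]
    let f : (LinearMap.ker A.mulVecLin) →ₗ[ℝ] ℝ × ℝ :=
      LinearMap.prod ((LinearMap.proj v).comp (Submodule.subtype _))
        ((LinearMap.proj w).comp (Submodule.subtype _))
    have hfinj : Function.Injective f := by
      rw [← LinearMap.ker_eq_bot, LinearMap.ker_eq_bot']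
      rintro ⟨x, hx⟩ hfx
      have hx' : A *ᵥ x = 0 := hx
      have h1 : x v = 0 := congrArg Prod.fst hfx
      have h2 : x w = 0 := congrArg Prod.snd hfx
      exact Subtype.ext (hinj x hx' h1 h2)
    calc Module.finrank ℝ (LinearMap.ker A.mulVecLin)
        ≤ Module.finrank ℝ (ℝ × ℝ) := LinearMap.finrank_le_finrank_of_injective hfinj
      _ = 2 := by simp
  refine ⟨main, ?_, ?_⟩
  · apply csSup_le'
    rintro n ⟨A, hA, hpsd, _, rfl⟩
    exact le_csSup ⟨2, by rintro m ⟨A', hA', hpsd', rfl⟩; exact main A' hA' hpsd'⟩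
      ⟨A, hA, hpsd, rfl⟩
  · apply csSup_le'
    rintro n ⟨A, hA, hpsd, rfl⟩
    exact main A hA hpsd
end

section
/- Let V = Fin 6 and let (Ge, Go) be the double prism: Ge is the simple graph with edges {0,1}, {0,2}, {1,2}, {3,4}, {3,5}, {4,5}, {0,3}, {1,4}, {2,5}, and Go is the simple graph with edges {0,3}, {1,4}, {2,5} (so each of the pairs {0,3}, {1,4}, {2,5} is joined by both an even and an odd edge, and the two triangles {0,1,2} and {3,4,5} consist of even edges). Then ν(Ge, Go) = 2. -/
open Matrix

private lemma dp_self_nonneg (v : Fin 6 → ℝ) : 0 ≤ v ⬝ᵥ v :=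
  Finset.sum_nonneg fun _ _ => mul_self_nonneg _

private lemma pos_self {x y : Fin 6 → ℝ} (h : x ⬝ᵥ y ≠ 0) : 0 < x ⬝ᵥ x := by
  have hx : x ≠ 0 := fun h0 => h (by rw [h0, zero_dotProduct])
  exact lt_of_le_of_ne (dp_self_nonneg x) (fun hh => hx (dotProduct_self_eq_zero.1 hh.symm))

private lemma dp_comb {p q r u : Fin 6 → ℝ} {a b c : ℝ} (h : a • p + b • q + c • r = u)
    (w : Fin 6 → ℝ) : a * (p ⬝ᵥ w) + b * (q ⬝ᵥ w) + c * (r ⬝ᵥ w) = u ⬝ᵥ w := by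
  rw [← h]; simp [add_dotProduct, smul_dotProduct]

private lemma dp_comb4 {p q r s : Fin 6 → ℝ} {a b c d : ℝ}
    (h : a • p + b • q + c • r + d • s = 0) (w : Fin 6 → ℝ) :
    a * (p ⬝ᵥ w) + b * (q ⬝ᵥ w) + c * (r ⬝ᵥ w) + d * (s ⬝ᵥ w) = 0 := by
  have := congrArg (fun z => z ⬝ᵥ w) h
  simpa [add_dotProduct, smul_dotProduct] using this

private lemma three_neg {a b c : ℝ} (h1 : a * b < 0) (h2 : a * c < 0) (h3 : b * c < 0) :
    False := by
  nlinarith [sq_nonneg (a * b * c), mul_pos (mul_pos (neg_pos.2 h1) (neg_pos.2 h2)) (neg_pos.2 h3)]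

private lemma triangle_no_dep {p q r : Fin 6 → ℝ} (hpq : p ⬝ᵥ q < 0) (hpr : p ⬝ᵥ r < 0)
    (hqr : q ⬝ᵥ r < 0) {y z : ℝ} (h : y • q + z • r = 0) (hyz : ¬(y = 0 ∧ z = 0)) : False := by
  have e1 : y * (q ⬝ᵥ p) + z * (r ⬝ᵥ p) = 0 := by
    have := congrArg (fun w => w ⬝ᵥ p) h
    simpa [add_dotProduct, smul_dotProduct] using this
  have e2 : y * (q ⬝ᵥ q) + z * (r ⬝ᵥ q) = 0 := by
    have := congrArg (fun w => w ⬝ᵥ q) h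
    simpa [add_dotProduct, smul_dotProduct] using this
  have e3 : y * (q ⬝ᵥ r) + z * (r ⬝ᵥ r) = 0 := by
    have := congrArg (fun w => w ⬝ᵥ r) h
    simpa [add_dotProduct, smul_dotProduct] using this
  rw [dotProduct_comm q p] at e1
  rw [dotProduct_comm r p] at e1
  rw [dotProduct_comm r q] at e2
  have ha : 0 ≤ q ⬝ᵥ q := dp_self_nonneg q
  have hb : 0 ≤ r ⬝ᵥ r := dp_self_nonneg r
  set A := q ⬝ᵥ q; set B := r ⬝ᵥ r; set C := q ⬝ᵥ r
  set D := p ⬝ᵥ q; set E := p ⬝ᵥ r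
  rcases lt_trichotomy y 0 with hy|hy|hy
  · rcases lt_trichotomy z 0 with hz|hz|hz
    · nlinarith
    · subst hz; nlinarith
    · nlinarith
  · subst hy
    have hz : z ≠ 0 := fun hh => hyz ⟨rfl, hh⟩
    have : z * E = 0 := by linarith
    rcases mul_eq_zero.1 this with hh|hh
    · exact hz hh
    · exact absurd hh (ne_of_lt hpr)
  · rcases lt_trichotomy z 0 with hz|hz|hz
    · nlinarith
    · subst hz; nlinarith
    · nlinarith

private lemma gram2_pos {p q r : Fin 6 → ℝ} (hpq : p ⬝ᵥ q < 0) (hpr : p ⬝ᵥ r < 0)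
    (hqr : q ⬝ᵥ r < 0) : 0 < (q ⬝ᵥ q) * (r ⬝ᵥ r) - (q ⬝ᵥ r) ^ 2 := by
  have hrr : 0 < r ⬝ᵥ r := pos_self (x := r) (y := q) (by rw [dotProduct_comm]; exact ne_of_lt hqr)
  have hw : 0 ≤ ((r ⬝ᵥ r) • q + (-(q ⬝ᵥ r)) • r) ⬝ᵥ ((r ⬝ᵥ r) • q + (-(q ⬝ᵥ r)) • r) :=
    dp_self_nonneg _
  have hexp : ((r ⬝ᵥ r) • q + (-(q ⬝ᵥ r)) • r) ⬝ᵥ ((r ⬝ᵥ r) • q + (-(q ⬝ᵥ r)) • r)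
      = (r ⬝ᵥ r) * ((q ⬝ᵥ q) * (r ⬝ᵥ r) - (q ⬝ᵥ r) ^ 2) := by
    simp only [add_dotProduct, dotProduct_add, smul_dotProduct, dotProduct_smul, smul_eq_mul]
    rw [dotProduct_comm r q]; ring
  rw [hexp] at hw
  have hge : 0 ≤ (q ⬝ᵥ q) * (r ⬝ᵥ r) - (q ⬝ᵥ r) ^ 2 := nonneg_of_mul_nonneg_right (by nlinarith) hrr
  rcases lt_or_eq_of_le hge with h|h
  · exact h
  · exfalso
    have hzero : ((r ⬝ᵥ r) • q + (-(q ⬝ᵥ r)) • r) ⬝ᵥ ((r ⬝ᵥ r) • q + (-(q ⬝ᵥ r)) • r) = 0 := by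
      rw [hexp, ← h]; ring
    have hdep : (r ⬝ᵥ r) • q + (-(q ⬝ᵥ r)) • r = 0 := dotProduct_self_eq_zero.1 hzero
    exact triangle_no_dep hpq hpr hqr hdep (fun hh => (ne_of_gt hrr) hh.1)

private lemma gram3_dep {u v w : Fin 6 → ℝ}
    (h : (u ⬝ᵥ u) * ((v ⬝ᵥ v) * (w ⬝ᵥ w) - (v ⬝ᵥ w) ^ 2)
        - (u ⬝ᵥ v) * ((u ⬝ᵥ v) * (w ⬝ᵥ w) - (v ⬝ᵥ w) * (u ⬝ᵥ w))
        + (u ⬝ᵥ w) * ((u ⬝ᵥ v) * (v ⬝ᵥ w) - (v ⬝ᵥ v) * (u ⬝ᵥ w)) = 0) :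
    ∃ x : Fin 3 → ℝ, x ≠ 0 ∧ x 0 • u + x 1 • v + x 2 • w = 0 := by
  have hdet : (!![u ⬝ᵥ u, u ⬝ᵥ v, u ⬝ᵥ w; u ⬝ᵥ v, v ⬝ᵥ v, v ⬝ᵥ w; u ⬝ᵥ w, v ⬝ᵥ w, w ⬝ᵥ w] :
      Matrix (Fin 3) (Fin 3) ℝ).det = 0 := by
    rw [Matrix.det_fin_three]
    simp only [of_apply, cons_val', cons_val_zero, cons_val_one, cons_val_two, empty_val', cons_val_fin_one, head_cons, tail_cons, head_fin_const]
    linear_combination h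
  obtain ⟨x, hx0, hx⟩ := (Matrix.exists_mulVec_eq_zero_iff).2 hdet
  refine ⟨x, hx0, ?_⟩
  have e0 := congrFun hx 0
  have e1 := congrFun hx 1
  have e2 := congrFun hx 2
  simp [Matrix.mulVec, dotProduct, Fin.sum_univ_three] at e0 e1 e2
  have hz : (x 0 • u + x 1 • v + x 2 • w) ⬝ᵥ (x 0 • u + x 1 • v + x 2 • w) = 0 := by
    simp only [add_dotProduct, dotProduct_add, smul_dotProduct, dotProduct_smul, smul_eq_mul]
    rw [dotProduct_comm v u, dotProduct_comm w u, dotProduct_comm w v]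
    simp only [dotProduct]
    linear_combination x 0 * e0 + x 1 * e1 + x 2 * e2
  exact dotProduct_self_eq_zero.1 hz

open scoped MatrixOrder in
set_option maxHeartbeats 2000000 in
private lemma upper (A : Matrix (Fin 6) (Fin 6) ℝ) (hsym : A.IsSymm) (hPSD : A.PosSemidef)
    (h01 : A 0 1 < 0) (h02 : A 0 2 < 0) (h12 : A 1 2 < 0)
    (h34 : A 3 4 < 0) (h35 : A 3 5 < 0) (h45 : A 4 5 < 0)
    (h04 : A 0 4 = 0) (h05 : A 0 5 = 0) (h13 : A 1 3 = 0) (h15 : A 1 5 = 0)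
    (h23 : A 2 3 = 0) (h24 : A 2 4 = 0) : matNullity A ≤ 2 := by
  classical
  by_contra hcon
  push_neg at hcon
  -- square-root factorization
  set B := CFC.sqrt A with hB
  have hBt : Bᵀ = B := by
    have h := (CFC.sqrt_nonneg A).posSemidef.1
    rwa [Matrix.IsHermitian, conjTranspose_eq_transpose_of_trivial] at h
  have hBB : B * B = A := CFC.sqrt_mul_sqrt_self A hPSD.nonneg
  set v : Fin 6 → (Fin 6 → ℝ) := fun i => B i with hvdef
  have hv : ∀ i j, v i ⬝ᵥ v j = A i j := by
    intro i j
    have h1 : v i ⬝ᵥ v j = (B * Bᵀ) i j := by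
      simp [hvdef, Matrix.mul_apply, dotProduct, Matrix.transpose_apply]
    rw [h1, hBt, hBB]
  -- the span of the rows of B has dimension ≤ 3
  have hker : LinearMap.ker B.mulVecLin = LinearMap.ker A.mulVecLin := by
    ext x
    simp only [LinearMap.mem_ker, mulVecLin_apply]
    constructor
    · intro hx; rw [← hBB, ← mulVec_mulVec, hx, mulVec_zero]
    · intro hx
      have hAt : Aᵀ = A := by
        have h := hPSD.1
        rwa [Matrix.IsHermitian, conjTranspose_eq_transpose_of_trivial] at h
      have h0 : (B *ᵥ x) ⬝ᵥ (B *ᵥ x) = 0 := by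
        rw [dotProduct_mulVec, ← Matrix.vecMul_transpose, hBt, vecMul_vecMul, hBB,
          ← Matrix.mulVec_transpose, hAt, hx, zero_dotProduct]
      exact dotProduct_self_eq_zero.1 h0
  have hrank : Module.finrank ℝ (Submodule.span ℝ (Set.range v)) ≤ 3 := by
    have hspan : Submodule.span ℝ (Set.range v) = LinearMap.range B.mulVecLin := by
      rw [Matrix.range_mulVecLin, ← Matrix.row_transpose, hBt]; rfl
    rw [hspan]
    have hrn := LinearMap.finrank_range_add_finrank_ker B.mulVecLin
    rw [hker] at hrn
    have h6 : Module.finrank ℝ (Fin 6 → ℝ) = 6 := by simp [Module.finrank_pi]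
    rw [h6] at hrn
    unfold matNullity at hcon
    omega
  -- symmetric entry facts
  have hsm : ∀ i j : Fin 6, A j i = A i j := hsym.apply
  -- basic dot facts
  have d34 : v 3 ⬝ᵥ v 4 < 0 := by rw [hv]; exact h34
  have d35 : v 3 ⬝ᵥ v 5 < 0 := by rw [hv]; exact h35
  have d45 : v 4 ⬝ᵥ v 5 < 0 := by rw [hv]; exact h45
  have d20 : v 2 ⬝ᵥ v 0 < 0 := by rw [hv, hsm]; exact h02
  have d21 : v 2 ⬝ᵥ v 1 < 0 := by rw [hv, hsm]; exact h12
  have d01 : v 0 ⬝ᵥ v 1 < 0 := by rw [hv]; exact h01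
  -- diagonal positivity
  have m33 : 0 < A 3 3 := by rw [← hv]; exact pos_self (y := v 4) (by rw [hv]; exact ne_of_lt h34)
  have m44 : 0 < A 4 4 := by rw [← hv]; exact pos_self (y := v 5) (by rw [hv]; exact ne_of_lt h45)
  have m55 : 0 < A 5 5 := by
    rw [← hv]; exact pos_self (y := v 3) (by rw [hv, hsm]; exact ne_of_lt h35)
  have m00 : 0 < A 0 0 := by rw [← hv]; exact pos_self (y := v 1) (by rw [hv]; exact ne_of_lt h01)
  have m11 : 0 < A 1 1 := by rw [← hv]; exact pos_self (y := v 2) (by rw [hv]; exact ne_of_lt h12)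
  -- flipped zero facts
  have h31 : A 3 1 = 0 := (hsm 1 3).trans h13
  have h40 : A 4 0 = 0 := (hsm 0 4).trans h04
  have h50 : A 5 0 = 0 := (hsm 0 5).trans h05
  have h51 : A 5 1 = 0 := (hsm 1 5).trans h15
  have h32 : A 3 2 = 0 := (hsm 2 3).trans h23
  have h42 : A 4 2 = 0 := (hsm 2 4).trans h24
  have h43 : A 4 3 = A 3 4 := hsm 3 4
  have h53 : A 5 3 = A 3 5 := hsm 3 5
  have h54 : A 5 4 = A 4 5 := hsm 4 5
  have h10 : A 1 0 = A 0 1 := hsm 0 1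
  have h41 : A 4 1 = A 1 4 := hsm 1 4
  have h52 : A 5 2 = A 2 5 := hsm 2 5
  -- Gram 2x2 positivity facts
  have g45pos : 0 < A 4 4 * A 5 5 - A 4 5 ^ 2 := by
    have := gram2_pos d34 d35 d45; rwa [hv, hv, hv] at this
  have g01pos : 0 < A 0 0 * A 1 1 - A 0 1 ^ 2 := by
    have := gram2_pos d20 d21 d01; rwa [hv, hv, hv] at this
  -- case split on the 3x3 Gram determinant of v3,v4,v5
  by_cases hD : A 3 3 * (A 4 4 * A 5 5 - A 4 5 ^ 2)
      - A 3 4 * (A 3 4 * A 5 5 - A 4 5 * A 3 5)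
      + A 3 5 * (A 3 4 * A 4 5 - A 4 4 * A 3 5) = 0
  · -- dependent triple: get a linear relation
    obtain ⟨x, hx0, hx⟩ := gram3_dep (u := v 3) (v := v 4) (w := v 5)
      (by rw [hv, hv, hv, hv, hv, hv]; linear_combination hD)
    by_cases hx1 : x 1 = 0
    · -- relation between v3 and v5 only: contradiction with the triangle
      have hx' : x 0 • v 3 + x 2 • v 5 = 0 := by
        rw [hx1] at hx; simpa using hx
      exact triangle_no_dep (p := v 4) (q := v 3) (r := v 5)
        (by rw [dotProduct_comm, hv]; exact h34) (by rw [hv]; exact h45) d35 hx'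
        (fun hh => hx0 (funext fun i => by fin_cases i <;> simp [hh.1, hx1, hh.2]))
    · -- v1 ⊥ v4 : the quadruple v0,v1,v4,v5 is independent
      have e := dp_comb hx (v 1)
      rw [zero_dotProduct, hv, hv, hv, h31, h41, h51] at e
      have hd41 : A 1 4 = 0 := by
        rcases mul_eq_zero.1 (by linarith : x 1 * A 1 4 = 0) with hh|hh
        · exact absurd hh hx1
        · exact hh
      have hli : LinearIndependent ℝ ![v 0, v 1, v 4, v 5] := by
        rw [Fintype.linearIndependent_iff]
        intro g hg
        rw [Fin.sum_univ_four] at hg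
        simp only [Matrix.cons_val_zero, Matrix.cons_val_one, Matrix.head_cons,
          Matrix.cons_val_two, Matrix.tail_cons, Matrix.cons_val_three] at hg
        have e0 := dp_comb4 hg (v 0)
        have e1 := dp_comb4 hg (v 1)
        have e4 := dp_comb4 hg (v 4)
        have e5 := dp_comb4 hg (v 5)
        rw [hv, hv, hv, hv] at e0 e1 e4 e5
        rw [h10, h40, h50] at e0
        rw [h41, h51] at e1
        rw [hd41] at e1
        rw [h04, hd41, h54] at e4
        rw [h05, h15] at e5
        have hg0 : g 0 = 0 := by
          rcases mul_eq_zero.1 (show g 0 * (A 0 0 * A 1 1 - A 0 1 ^ 2) = 0 by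
            linear_combination A 1 1 * e0 - A 0 1 * e1) with hh|hh
          · exact hh
          · exact absurd hh (ne_of_gt g01pos)
        have hg1 : g 1 = 0 := by
          rcases mul_eq_zero.1 (show g 1 * (A 0 0 * A 1 1 - A 0 1 ^ 2) = 0 by
            linear_combination A 0 0 * e1 - A 0 1 * e0) with hh|hh
          · exact hh
          · exact absurd hh (ne_of_gt g01pos)
        have hg2 : g 2 = 0 := by
          rcases mul_eq_zero.1 (show g 2 * (A 4 4 * A 5 5 - A 4 5 ^ 2) = 0 by
            linear_combination A 5 5 * e4 - A 4 5 * e5) with hh|hh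
          · exact hh
          · exact absurd hh (ne_of_gt g45pos)
        have hg3 : g 3 = 0 := by
          rcases mul_eq_zero.1 (show g 3 * (A 4 4 * A 5 5 - A 4 5 ^ 2) = 0 by
            linear_combination A 4 4 * e5 - A 4 5 * e4) with hh|hh
          · exact hh
          · exact absurd hh (ne_of_gt g45pos)
        intro i; fin_cases i <;> assumption
      have h4 : Module.finrank ℝ (Submodule.span ℝ (Set.range ![v 0, v 1, v 4, v 5])) = 4 := by
        rw [finrank_span_eq_card hli]; rfl
      have hle : Submodule.span ℝ (Set.range ![v 0, v 1, v 4, v 5])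
          ≤ Submodule.span ℝ (Set.range v) := by
        apply Submodule.span_le.2
        rintro y ⟨i, rfl⟩
        fin_cases i <;> exact Submodule.subset_span ⟨_, rfl⟩
      have := Submodule.finrank_mono hle
      omega
  · -- independent triple: all of v0,v1,v2 lie in its span; sign contradiction
    have hC12pos : 0 < A 3 5 * A 4 5 - A 3 4 * A 5 5 := by
      have u1 := mul_pos_of_neg_of_neg h35 h45
      have u2 := mul_neg_of_neg_of_pos h34 m55
      linarith
    have hC13pos : 0 < A 3 4 * A 4 5 - A 4 4 * A 3 5 := by
      have u1 := mul_pos_of_neg_of_neg h34 h45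
      have u2 := mul_neg_of_pos_of_neg m44 h35
      linarith
    have hC23pos : 0 < A 3 4 * A 3 5 - A 3 3 * A 4 5 := by
      have u1 := mul_pos_of_neg_of_neg h34 h35
      have u2 := mul_neg_of_pos_of_neg m33 h45
      linarith
    -- positivity of the determinant
    have hDpos : 0 < A 3 3 * (A 4 4 * A 5 5 - A 4 5 ^ 2)
        - A 3 4 * (A 3 4 * A 5 5 - A 4 5 * A 3 5)
        + A 3 5 * (A 3 4 * A 4 5 - A 4 4 * A 3 5) := by
      have hq : 0 ≤ ((A 4 4 * A 5 5 - A 4 5 ^ 2) • v 3 + (A 3 5 * A 4 5 - A 3 4 * A 5 5) • v 4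
            + (A 3 4 * A 4 5 - A 4 4 * A 3 5) • v 5) ⬝ᵥ
          ((A 4 4 * A 5 5 - A 4 5 ^ 2) • v 3 + (A 3 5 * A 4 5 - A 3 4 * A 5 5) • v 4
            + (A 3 4 * A 4 5 - A 4 4 * A 3 5) • v 5) := dp_self_nonneg _
      have hqe : ((A 4 4 * A 5 5 - A 4 5 ^ 2) • v 3 + (A 3 5 * A 4 5 - A 3 4 * A 5 5) • v 4
            + (A 3 4 * A 4 5 - A 4 4 * A 3 5) • v 5) ⬝ᵥ
          ((A 4 4 * A 5 5 - A 4 5 ^ 2) • v 3 + (A 3 5 * A 4 5 - A 3 4 * A 5 5) • v 4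
            + (A 3 4 * A 4 5 - A 4 4 * A 3 5) • v 5)
          = (A 4 4 * A 5 5 - A 4 5 ^ 2) * (A 3 3 * (A 4 4 * A 5 5 - A 4 5 ^ 2)
            - A 3 4 * (A 3 4 * A 5 5 - A 4 5 * A 3 5)
            + A 3 5 * (A 3 4 * A 4 5 - A 4 4 * A 3 5)) := by
        simp only [add_dotProduct, dotProduct_add, smul_dotProduct, dotProduct_smul,
          smul_eq_mul, hv]
        rw [h43, h53, h54]
        ring
      rw [hqe] at hq
      rcases lt_or_eq_of_le (nonneg_of_mul_nonneg_right hq g45pos) with hh|hh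
      · exact hh
      · exact absurd hh.symm hD
    -- v3, v4, v5 are linearly independent
    have hli3 : LinearIndependent ℝ ![v 3, v 4, v 5] := by
      rw [Fintype.linearIndependent_iff]
      intro g hg
      rw [Fin.sum_univ_three] at hg
      simp only [Matrix.cons_val_zero, Matrix.cons_val_one, Matrix.head_cons,
        Matrix.cons_val_two, Matrix.tail_cons] at hg
      have e3 := dp_comb hg (v 3)
      have e4 := dp_comb hg (v 4)
      have e5 := dp_comb hg (v 5)
      rw [zero_dotProduct, hv, hv, hv] at e3 e4 e5
      rw [h43, h53] at e3
      rw [h54] at e4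
      have hg0 : g 0 = 0 := by
        rcases mul_eq_zero.1 (show g 0 * (A 3 3 * (A 4 4 * A 5 5 - A 4 5 ^ 2)
            - A 3 4 * (A 3 4 * A 5 5 - A 4 5 * A 3 5)
            + A 3 5 * (A 3 4 * A 4 5 - A 4 4 * A 3 5)) = 0 by
          linear_combination (A 4 4 * A 5 5 - A 4 5 ^ 2) * e3
            + (A 3 5 * A 4 5 - A 3 4 * A 5 5) * e4
            + (A 3 4 * A 4 5 - A 4 4 * A 3 5) * e5) with hh|hh
        · exact hh
        · exact absurd hh (ne_of_gt hDpos)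
      have hg1 : g 1 = 0 := by
        rcases mul_eq_zero.1 (show g 1 * (A 3 3 * (A 4 4 * A 5 5 - A 4 5 ^ 2)
            - A 3 4 * (A 3 4 * A 5 5 - A 4 5 * A 3 5)
            + A 3 5 * (A 3 4 * A 4 5 - A 4 4 * A 3 5)) = 0 by
          linear_combination (A 3 5 * A 4 5 - A 3 4 * A 5 5) * e3
            + (A 3 3 * A 5 5 - A 3 5 ^ 2) * e4
            + (A 3 4 * A 3 5 - A 3 3 * A 4 5) * e5) with hh|hh
        · exact hh
        · exact absurd hh (ne_of_gt hDpos)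
      have hg2 : g 2 = 0 := by
        rcases mul_eq_zero.1 (show g 2 * (A 3 3 * (A 4 4 * A 5 5 - A 4 5 ^ 2)
            - A 3 4 * (A 3 4 * A 5 5 - A 4 5 * A 3 5)
            + A 3 5 * (A 3 4 * A 4 5 - A 4 4 * A 3 5)) = 0 by
          linear_combination (A 3 4 * A 4 5 - A 4 4 * A 3 5) * e3
            + (A 3 4 * A 3 5 - A 3 3 * A 4 5) * e4
            + (A 3 3 * A 4 4 - A 3 4 ^ 2) * e5) with hh|hh
        · exact hh
        · exact absurd hh (ne_of_gt hDpos)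
      intro i; fin_cases i <;> assumption
    have h3 : Module.finrank ℝ (Submodule.span ℝ (Set.range ![v 3, v 4, v 5])) = 3 := by
      rw [finrank_span_eq_card hli3]; rfl
    have hle : Submodule.span ℝ (Set.range ![v 3, v 4, v 5]) ≤ Submodule.span ℝ (Set.range v) := by
      apply Submodule.span_le.2
      rintro y ⟨i, rfl⟩
      fin_cases i <;> exact Submodule.subset_span ⟨_, rfl⟩
    have heq : Submodule.span ℝ (Set.range ![v 3, v 4, v 5]) = Submodule.span ℝ (Set.range v) :=
      Submodule.eq_of_le_of_finrank_le hle (by rw [h3]; exact hrank)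
    have hmem : ∀ k : Fin 6, v k ∈ Submodule.span ℝ (Set.range ![v 3, v 4, v 5]) := by
      intro k; rw [heq]; exact Submodule.subset_span ⟨k, rfl⟩
    obtain ⟨c, hc⟩ := (Submodule.mem_span_range_iff_exists_fun ℝ).1 (hmem 0)
    obtain ⟨d, hd⟩ := (Submodule.mem_span_range_iff_exists_fun ℝ).1 (hmem 1)
    rw [Fin.sum_univ_three] at hc hd
    simp only [Matrix.cons_val_zero, Matrix.cons_val_one, Matrix.head_cons,
      Matrix.cons_val_two, Matrix.tail_cons] at hc hd
    -- equations
    have E1 := dp_comb hc (v 3); have E2 := dp_comb hc (v 4); have E3 := dp_comb hc (v 5)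
    have F1 := dp_comb hd (v 3); have F2 := dp_comb hd (v 4); have F3 := dp_comb hd (v 5)
    have E10 := dp_comb hc (v 1); have E11 := dp_comb hc (v 2); have E12 := dp_comb hd (v 2)
    rw [hv, hv, hv, hv, h43, h53] at E1
    rw [hv, hv, hv, hv, h54, h04] at E2
    rw [hv, hv, hv, hv, h05] at E3
    rw [hv, hv, hv, hv, h43, h53, h13] at F1
    rw [hv, hv, hv, hv, h54] at F2
    rw [hv, hv, hv, hv, h15] at F3
    rw [hv, hv, hv, hv, h31, h41, h51] at E10
    rw [hv, hv, hv, hv, h32, h42, h52] at E11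
    rw [hv, hv, hv, hv, h32, h42, h52] at E12
    -- Cramer identities and sign bookkeeping
    have hb : c 1 * (A 3 3 * (A 4 4 * A 5 5 - A 4 5 ^ 2)
        - A 3 4 * (A 3 4 * A 5 5 - A 4 5 * A 3 5)
        + A 3 5 * (A 3 4 * A 4 5 - A 4 4 * A 3 5))
        = A 0 3 * (A 3 5 * A 4 5 - A 3 4 * A 5 5) := by
      linear_combination (A 3 5 * A 4 5 - A 3 4 * A 5 5) * E1
        + (A 3 3 * A 5 5 - A 3 5 ^ 2) * E2 + (A 3 4 * A 3 5 - A 3 3 * A 4 5) * E3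
    have hcc : c 2 * (A 3 3 * (A 4 4 * A 5 5 - A 4 5 ^ 2)
        - A 3 4 * (A 3 4 * A 5 5 - A 4 5 * A 3 5)
        + A 3 5 * (A 3 4 * A 4 5 - A 4 4 * A 3 5))
        = A 0 3 * (A 3 4 * A 4 5 - A 4 4 * A 3 5) := by
      linear_combination (A 3 4 * A 4 5 - A 4 4 * A 3 5) * E1
        + (A 3 4 * A 3 5 - A 3 3 * A 4 5) * E2 + (A 3 3 * A 4 4 - A 3 4 ^ 2) * E3
    have hdd : d 2 * (A 3 3 * (A 4 4 * A 5 5 - A 4 5 ^ 2)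
        - A 3 4 * (A 3 4 * A 5 5 - A 4 5 * A 3 5)
        + A 3 5 * (A 3 4 * A 4 5 - A 4 4 * A 3 5))
        = A 1 4 * (A 3 4 * A 3 5 - A 3 3 * A 4 5) := by
      linear_combination (A 3 4 * A 4 5 - A 4 4 * A 3 5) * F1
        + (A 3 4 * A 3 5 - A 3 3 * A 4 5) * F2 + (A 3 3 * A 4 4 - A 3 4 ^ 2) * F3
    have hT01 : A 0 3 * A 1 4 * (A 3 5 * A 4 5 - A 3 4 * A 5 5)
        = A 0 1 * (A 3 3 * (A 4 4 * A 5 5 - A 4 5 ^ 2)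
          - A 3 4 * (A 3 4 * A 5 5 - A 4 5 * A 3 5)
          + A 3 5 * (A 3 4 * A 4 5 - A 4 4 * A 3 5)) := by
      linear_combination (-(A 1 4)) * hb + (A 3 3 * (A 4 4 * A 5 5 - A 4 5 ^ 2)
          - A 3 4 * (A 3 4 * A 5 5 - A 4 5 * A 3 5)
          + A 3 5 * (A 3 4 * A 4 5 - A 4 4 * A 3 5)) * E10
    have hT02 : A 0 3 * A 2 5 * (A 3 4 * A 4 5 - A 4 4 * A 3 5)
        = A 0 2 * (A 3 3 * (A 4 4 * A 5 5 - A 4 5 ^ 2)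
          - A 3 4 * (A 3 4 * A 5 5 - A 4 5 * A 3 5)
          + A 3 5 * (A 3 4 * A 4 5 - A 4 4 * A 3 5)) := by
      linear_combination (-(A 2 5)) * hcc + (A 3 3 * (A 4 4 * A 5 5 - A 4 5 ^ 2)
          - A 3 4 * (A 3 4 * A 5 5 - A 4 5 * A 3 5)
          + A 3 5 * (A 3 4 * A 4 5 - A 4 4 * A 3 5)) * E11
    have hT12 : A 1 4 * A 2 5 * (A 3 4 * A 3 5 - A 3 3 * A 4 5)
        = A 1 2 * (A 3 3 * (A 4 4 * A 5 5 - A 4 5 ^ 2)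
          - A 3 4 * (A 3 4 * A 5 5 - A 4 5 * A 3 5)
          + A 3 5 * (A 3 4 * A 4 5 - A 4 4 * A 3 5)) := by
      linear_combination (-(A 2 5)) * hdd + (A 3 3 * (A 4 4 * A 5 5 - A 4 5 ^ 2)
          - A 3 4 * (A 3 4 * A 5 5 - A 4 5 * A 3 5)
          + A 3 5 * (A 3 4 * A 4 5 - A 4 4 * A 3 5)) * E12
    have ht01 : A 0 3 * A 1 4 < 0 := by
      have hn : A 0 3 * A 1 4 * (A 3 5 * A 4 5 - A 3 4 * A 5 5) < 0 := by
        rw [hT01]; exact mul_neg_of_neg_of_pos h01 hDpos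
      by_contra hge; push_neg at hge
      exact absurd hn (not_lt.2 (mul_nonneg hge hC12pos.le))
    have ht02 : A 0 3 * A 2 5 < 0 := by
      have hn : A 0 3 * A 2 5 * (A 3 4 * A 4 5 - A 4 4 * A 3 5) < 0 := by
        rw [hT02]; exact mul_neg_of_neg_of_pos h02 hDpos
      by_contra hge; push_neg at hge
      exact absurd hn (not_lt.2 (mul_nonneg hge hC13pos.le))
    have ht12 : A 1 4 * A 2 5 < 0 := by
      have hn : A 1 4 * A 2 5 * (A 3 4 * A 3 5 - A 3 3 * A 4 5) < 0 := by
        rw [hT12]; exact mul_neg_of_neg_of_pos h12 hDpos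
      by_contra hge; push_neg at hge
      exact absurd hn (not_lt.2 (mul_nonneg hge hC23pos.le))
    exact three_neg ht01 ht02 ht12


private def A0 : Matrix (Fin 6) (Fin 6) ℝ :=
  !![2,-1,-1,0,0,0; -1,2,-1,0,0,0; -1,-1,2,0,0,0;
     0,0,0,2,-1,-1; 0,0,0,-1,2,-1; 0,0,0,-1,-1,2]

private def listE : List (Fin 6 × Fin 6) :=
  [(0, 1), (0, 2), (1, 2), (3, 4), (3, 5), (4, 5), (0, 3), (1, 4), (2, 5)]
private def listO : List (Fin 6 × Fin 6) := [(0, 3), (1, 4), (2, 5)]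

private lemma vec6_0 {α : Type*} (a b c d e f : α) : ![a,b,c,d,e,f] 0 = a := rfl
private lemma vec6_1 {α : Type*} (a b c d e f : α) : ![a,b,c,d,e,f] 1 = b := rfl
private lemma vec6_2 {α : Type*} (a b c d e f : α) : ![a,b,c,d,e,f] 2 = c := rfl
private lemma vec6_3 {α : Type*} (a b c d e f : α) : ![a,b,c,d,e,f] 3 = d := rfl
private lemma vec6_4 {α : Type*} (a b c d e f : α) : ![a,b,c,d,e,f] 4 = e := rfl
private lemma vec6_5 {α : Type*} (a b c d e f : α) : ![a,b,c,d,e,f] 5 = f := rfl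

private lemma A0_sap :
    HasSAP (SimpleGraph.fromRel (fun i j : Fin 6 => (i, j) ∈ listE))
      (SimpleGraph.fromRel (fun i j : Fin 6 => (i, j) ∈ listO)) A0 := by
  intro X hXs hX0 hAX
  have z : ∀ i j : Fin 6, (i = j ∨ (i ≠ j ∧ (((i,j) ∈ listE ∨ (j,i) ∈ listE)
      ∨ ((i,j) ∈ listO ∨ (j,i) ∈ listO)))) → X i j = 0 := by
    intro i j h
    refine hX0 i j ?_
    rcases h with h | ⟨h1, h2⟩
    · exact Or.inl h
    · exact Or.inr (by simp only [SimpleGraph.sup_adj, SimpleGraph.fromRel_adj]; tauto)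
  have z00 : X 0 0 = 0 := z 0 0 (by decide)
  have z11 : X 1 1 = 0 := z 1 1 (by decide)
  have z22 : X 2 2 = 0 := z 2 2 (by decide)
  have z33 : X 3 3 = 0 := z 3 3 (by decide)
  have z44 : X 4 4 = 0 := z 4 4 (by decide)
  have z55 : X 5 5 = 0 := z 5 5 (by decide)
  have z01 : X 0 1 = 0 := z 0 1 (by decide)
  have z10 : X 1 0 = 0 := z 1 0 (by decide)
  have z02 : X 0 2 = 0 := z 0 2 (by decide)
  have z20 : X 2 0 = 0 := z 2 0 (by decide)
  have z12 : X 1 2 = 0 := z 1 2 (by decide)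
  have z21 : X 2 1 = 0 := z 2 1 (by decide)
  have z34 : X 3 4 = 0 := z 3 4 (by decide)
  have z43 : X 4 3 = 0 := z 4 3 (by decide)
  have z35 : X 3 5 = 0 := z 3 5 (by decide)
  have z53 : X 5 3 = 0 := z 5 3 (by decide)
  have z45 : X 4 5 = 0 := z 4 5 (by decide)
  have z54 : X 5 4 = 0 := z 5 4 (by decide)
  have z03 : X 0 3 = 0 := z 0 3 (by decide)
  have z30 : X 3 0 = 0 := z 3 0 (by decide)
  have z14 : X 1 4 = 0 := z 1 4 (by decide)
  have z41 : X 4 1 = 0 := z 4 1 (by decide)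
  have z25 : X 2 5 = 0 := z 2 5 (by decide)
  have z52 : X 5 2 = 0 := z 5 2 (by decide)
  -- equations from A0 * X = 0
  have E : ∀ r c : Fin 6, ∑ k : Fin 6, A0 r k * X k c = 0 := by
    intro r c
    have := congrFun (congrFun hAX r) c
    rwa [Matrix.mul_apply] at this
  have E30 := E 3 0; have E40 := E 4 0
  have E31 := E 3 1; have E51 := E 5 1
  have E32 := E 3 2; have E42 := E 4 2
  simp only [Fin.sum_univ_six, A0, Matrix.of_apply, vec6_0, vec6_1, vec6_2, vec6_3, vec6_4,
    vec6_5, zero_mul, zero_add, add_zero, neg_mul, one_mul] at E30 E40 E31 E51 E32 E42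
  have x40 : X 4 0 = 0 := by linarith [E30, E40, z30]
  have x50 : X 5 0 = 0 := by linarith [E30, E40, z30]
  have x31 : X 3 1 = 0 := by linarith [E31, E51, z41]
  have x51 : X 5 1 = 0 := by linarith [E31, E51, z41]
  have x32 : X 3 2 = 0 := by linarith [E32, E42, z52]
  have x42 : X 4 2 = 0 := by linarith [E32, E42, z52]
  have x04 : X 0 4 = 0 := (hXs.apply 0 4).symm.trans x40
  have x05 : X 0 5 = 0 := (hXs.apply 0 5).symm.trans x50
  have x13 : X 1 3 = 0 := (hXs.apply 1 3).symm.trans x31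
  have x15 : X 1 5 = 0 := (hXs.apply 1 5).symm.trans x51
  have x23 : X 2 3 = 0 := (hXs.apply 2 3).symm.trans x32
  have x24 : X 2 4 = 0 := (hXs.apply 2 4).symm.trans x42
  have key : ∀ i j : Fin 6, X i j = 0 := by
    intro i j
    fin_cases i <;> fin_cases j <;>
      first
        | exact z00 | exact z11 | exact z22 | exact z33 | exact z44 | exact z55
        | exact z01 | exact z10 | exact z02 | exact z20 | exact z12 | exact z21
        | exact z34 | exact z43 | exact z35 | exact z53 | exact z45 | exact z54
        | exact z03 | exact z30 | exact z14 | exact z41 | exact z25 | exact z52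
        | exact x40 | exact x50 | exact x31 | exact x51 | exact x32 | exact x42
        | exact x04 | exact x05 | exact x13 | exact x15 | exact x23 | exact x24
  exact Matrix.ext fun i j => key i j

private lemma A0_mem :
    A0 ∈ SignedSet (SimpleGraph.fromRel (fun i j : Fin 6 => (i, j) ∈ listE))
      (SimpleGraph.fromRel (fun i j : Fin 6 => (i, j) ∈ listO)) := by
  constructor
  · rw [Matrix.IsSymm]
    ext i j
    rw [Matrix.transpose_apply]
    fin_cases i <;> fin_cases j <;> rfl
  · intro i j
    fin_cases i <;> fin_cases j <;>
      refine ⟨?_, ?_, ?_⟩ <;>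
        first
          | exact fun h => absurd h (by simp only [SimpleGraph.fromRel_adj]; decide)
          | exact fun _ => show (-1:ℝ) < 0 by norm_num
          | exact fun _ => rfl


private lemma A0_symm : A0.IsSymm := by
  rw [Matrix.IsSymm]
  ext i j
  rw [Matrix.transpose_apply]
  fin_cases i <;> fin_cases j <;> rfl

private lemma A0_psd : A0.PosSemidef := by
  refine Matrix.PosSemidef.of_dotProduct_mulVec_nonneg ?_ ?_
  · rw [Matrix.IsHermitian, conjTranspose_eq_transpose_of_trivial]
    exact A0_symm
  · intro x
    have h : (star x) ⬝ᵥ (A0 *ᵥ x) =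
        (x 0 - x 1)^2 + (x 0 - x 2)^2 + (x 1 - x 2)^2
        + (x 3 - x 4)^2 + (x 3 - x 5)^2 + (x 4 - x 5)^2 := by
      simp only [A0, dotProduct, Matrix.mulVec, Fin.sum_univ_six, Matrix.of_apply,
        vec6_0, vec6_1, vec6_2, vec6_3, vec6_4, vec6_5, Pi.star_apply, star_trivial]
      ring
    rw [h]
    positivity

private def u0 : Fin 6 → ℝ := ![1,1,1,0,0,0]
private def w0 : Fin 6 → ℝ := ![0,0,0,1,1,1]

private lemma A0_ker : LinearMap.ker A0.mulVecLin = Submodule.span ℝ (Set.range ![u0, w0]) := by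
  apply le_antisymm
  · intro x hx
    simp only [LinearMap.mem_ker, mulVecLin_apply] at hx
    have e0 := congrFun hx 0
    have e1 := congrFun hx 1
    have e3 := congrFun hx 3
    have e4 := congrFun hx 4
    simp only [A0, Matrix.mulVec, dotProduct, Fin.sum_univ_six, Matrix.of_apply,
      vec6_0, vec6_1, vec6_2, vec6_3, vec6_4, vec6_5, Pi.zero_apply] at e0 e1 e3 e4
    rw [Submodule.mem_span_range_iff_exists_fun]
    refine ⟨![x 0, x 3], ?_⟩
    rw [Fin.sum_univ_two]
    funext k
    simp only [Matrix.cons_val_zero, Matrix.cons_val_one, Matrix.head_cons, Pi.add_apply,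
      Pi.smul_apply, smul_eq_mul]
    fin_cases k
    · show x 0 * 1 + x 3 * 0 = x 0; linarith
    · show x 0 * 1 + x 3 * 0 = x 1; linarith
    · show x 0 * 1 + x 3 * 0 = x 2; linarith
    · show x 0 * 0 + x 3 * 1 = x 3; linarith
    · show x 0 * 0 + x 3 * 1 = x 4; linarith
    · show x 0 * 0 + x 3 * 1 = x 5; linarith
  · rw [Submodule.span_le]
    rintro y ⟨i, rfl⟩
    simp only [SetLike.mem_coe, LinearMap.mem_ker, mulVecLin_apply]
    fin_cases i
    · show A0 *ᵥ u0 = 0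
      simp [A0, u0, Matrix.cons_mulVec, Matrix.cons_dotProduct, funext_iff,
        Fin.forall_fin_succ, Function.comp]
      norm_num
    · show A0 *ᵥ w0 = 0
      simp [A0, w0, Matrix.cons_mulVec, Matrix.cons_dotProduct, funext_iff,
        Fin.forall_fin_succ, Function.comp]
      norm_num
private lemma A0_nullity : matNullity A0 = 2 := by
  rw [matNullity, A0_ker, finrank_span_eq_card]
  · rfl
  · rw [Fintype.linearIndependent_iff]
    intro g hg
    rw [Fin.sum_univ_two] at hg
    simp only [Matrix.cons_val_zero, Matrix.cons_val_one, Matrix.head_cons] at hg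
    have e0 := congrFun hg 0
    have e3 := congrFun hg 3
    simp only [Pi.add_apply, Pi.smul_apply, smul_eq_mul, Pi.zero_apply, u0, w0,
      vec6_0, vec6_3, mul_one, mul_zero, add_zero, zero_add] at e0 e3
    intro i; fin_cases i <;> assumption


/-- the double prism has `ν = 2`. -/
theorem stmt15 :
    nuSigned
      (SimpleGraph.fromRel (fun i j : Fin 6 =>
        (i, j) ∈ ([(0, 1), (0, 2), (1, 2), (3, 4), (3, 5), (4, 5),
          (0, 3), (1, 4), (2, 5)] : List (Fin 6 × Fin 6))))
      (SimpleGraph.fromRel (fun i j : Fin 6 =>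
        (i, j) ∈ ([(0, 3), (1, 4), (2, 5)] : List (Fin 6 × Fin 6)))) = 2 := by
  have hmem : 2 ∈ {n | ∃ A ∈ SignedSet
      (SimpleGraph.fromRel (fun i j : Fin 6 => (i, j) ∈ listE))
      (SimpleGraph.fromRel (fun i j : Fin 6 => (i, j) ∈ listO)),
      A.PosSemidef ∧ HasSAP
        (SimpleGraph.fromRel (fun i j : Fin 6 => (i, j) ∈ listE))
        (SimpleGraph.fromRel (fun i j : Fin 6 => (i, j) ∈ listO)) A ∧ matNullity A = n} :=
    ⟨A0, A0_mem, A0_psd, A0_sap, A0_nullity⟩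
  have hub : ∀ n ∈ {n | ∃ A ∈ SignedSet
      (SimpleGraph.fromRel (fun i j : Fin 6 => (i, j) ∈ listE))
      (SimpleGraph.fromRel (fun i j : Fin 6 => (i, j) ∈ listO)),
      A.PosSemidef ∧ HasSAP
        (SimpleGraph.fromRel (fun i j : Fin 6 => (i, j) ∈ listE))
        (SimpleGraph.fromRel (fun i j : Fin 6 => (i, j) ∈ listO)) A ∧ matNullity A = n},
      n ≤ 2 := by
    rintro n ⟨A, hA, hpsd, -, rfl⟩
    refine upper A hA.1 hpsd ?_ ?_ ?_ ?_ ?_ ?_ ?_ ?_ ?_ ?_ ?_ ?_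
    · exact (hA.2 0 1).1 ⟨by simp only [SimpleGraph.fromRel_adj]; decide,
        by simp only [SimpleGraph.fromRel_adj]; decide⟩
    · exact (hA.2 0 2).1 ⟨by simp only [SimpleGraph.fromRel_adj]; decide,
        by simp only [SimpleGraph.fromRel_adj]; decide⟩
    · exact (hA.2 1 2).1 ⟨by simp only [SimpleGraph.fromRel_adj]; decide,
        by simp only [SimpleGraph.fromRel_adj]; decide⟩
    · exact (hA.2 3 4).1 ⟨by simp only [SimpleGraph.fromRel_adj]; decide,
        by simp only [SimpleGraph.fromRel_adj]; decide⟩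
    · exact (hA.2 3 5).1 ⟨by simp only [SimpleGraph.fromRel_adj]; decide,
        by simp only [SimpleGraph.fromRel_adj]; decide⟩
    · exact (hA.2 4 5).1 ⟨by simp only [SimpleGraph.fromRel_adj]; decide,
        by simp only [SimpleGraph.fromRel_adj]; decide⟩
    · exact (hA.2 0 4).2.2 ⟨by decide, by simp only [SimpleGraph.fromRel_adj]; decide,
        by simp only [SimpleGraph.fromRel_adj]; decide⟩
    · exact (hA.2 0 5).2.2 ⟨by decide, by simp only [SimpleGraph.fromRel_adj]; decide,
        by simp only [SimpleGraph.fromRel_adj]; decide⟩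
    · exact (hA.2 1 3).2.2 ⟨by decide, by simp only [SimpleGraph.fromRel_adj]; decide,
        by simp only [SimpleGraph.fromRel_adj]; decide⟩
    · exact (hA.2 1 5).2.2 ⟨by decide, by simp only [SimpleGraph.fromRel_adj]; decide,
        by simp only [SimpleGraph.fromRel_adj]; decide⟩
    · exact (hA.2 2 3).2.2 ⟨by decide, by simp only [SimpleGraph.fromRel_adj]; decide,
        by simp only [SimpleGraph.fromRel_adj]; decide⟩
    · exact (hA.2 2 4).2.2 ⟨by decide, by simp only [SimpleGraph.fromRel_adj]; decide,
        by simp only [SimpleGraph.fromRel_adj]; decide⟩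
  rw [nuSigned]
  exact le_antisymm (csSup_le ⟨2, hmem⟩ hub) (le_csSup ⟨2, fun n hn => hub n hn⟩ hmem)
end
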